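/- arXiv:1312.4493 — 4 statements merged into one kernel-verified Lean document; each statement's English description precedes it below -/
import Mathlib

section
/- Let K be a field with non-archimedean absolute value and residue characteristic p ≥ 0, and let f ∈ K[z] be a polynomial of degree n ≥ 1. Let V ⊆ ℂ_v be a closed disk containing all the roots of f, and let e = v_p(n) ≥ 0. Then there is a point α ∈ V such that [K(α):K] ≤ p^e. -/
open Polynomial

noncomputable section

namespace PGR

open scoped Classical

variable {Ω : Type} [Field Ω]

/-- The ring of integers `{x : v x ≤ 1}` of a non-archimedean absolute value,
as a valuation subring. -/
def integers (v : AbsoluteValue Ω ℝ) (hv : IsNonarchimedean v) : ValuationSubring Ω where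
  carrier := {x | v x ≤ 1}
  one_mem' := le_of_eq v.map_one
  mul_mem' := fun {a b} ha hb => by
    simp only [Set.mem_setOf_eq, v.map_mul] at *
    exact mul_le_one₀ ha (v.nonneg b) hb
  zero_mem' := by simp only [Set.mem_setOf_eq, v.map_zero]; norm_num
  add_mem' := fun {a b} ha hb => le_trans (hv a b) (max_le ha hb)
  neg_mem' := fun {a} ha => by simpa only [Set.mem_setOf_eq, v.map_neg] using ha
  mem_or_inv_mem' := fun x => by
    by_cases h : v x ≤ 1
    · exact Or.inl h
    · right
      rcases eq_or_ne x 0 with rfl | hx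
      · simp only [Set.mem_setOf_eq, inv_zero, v.map_zero]; norm_num
      · have h1 : v x⁻¹ = (v x)⁻¹ := map_inv₀ v x
        have h2 : (1:ℝ) ≤ v x := le_of_not_ge h
        simp only [Set.mem_setOf_eq, h1]
        exact inv_le_one_of_one_le₀ h2

/-- The residue field of a non-archimedean absolute value. -/
def resField (v : AbsoluteValue Ω ℝ) (hv : IsNonarchimedean v) : Type :=
  IsLocalRing.ResidueField (integers v hv)

instance (v : AbsoluteValue Ω ℝ) (hv : IsNonarchimedean v) : Field (resField v hv) :=
  inferInstanceAs (Field (IsLocalRing.ResidueField (integers v hv)))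

/-- Reduction of an element of the ring of integers to the residue field;
junk value `0` for elements of absolute value `> 1`. -/
def redCoeff (v : AbsoluteValue Ω ℝ) (hv : IsNonarchimedean v) (x : Ω) : resField v hv :=
  if h : v x ≤ 1 then IsLocalRing.residue (integers v hv) ⟨x, h⟩ else 0

/-- Coefficientwise reduction of a polynomial to the residue field. -/
def polyReduce (v : AbsoluteValue Ω ℝ) (hv : IsNonarchimedean v) (f : Polynomial Ω) :
    Polynomial (resField v hv) :=
  ∑ n ∈ f.support, Polynomial.C (redCoeff v hv (f.coeff n)) * Polynomial.X ^ n

/-- The degree of a rational function: the maximum of the degrees of its numerator and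
denominator (in lowest terms). -/
def ratfuncDegree {F : Type} [Field F] (φ : RatFunc F) : ℕ :=
  max φ.num.natDegree φ.denom.natDegree

/-- `φ ∈ F(z)` has good reduction: writing `φ = f/g` in lowest terms with coefficients
in the ring of integers, at least one of absolute value 1, the coefficientwise reduction
`f̄/ḡ` has the same degree as `φ`. -/
def HasGoodReduction (v : AbsoluteValue Ω ℝ) (hv : IsNonarchimedean v) (φ : RatFunc Ω) : Prop :=
  ∃ f g : Polynomial Ω, IsCoprime f g ∧ g ≠ 0 ∧
    φ = algebraMap (Polynomial Ω) (RatFunc Ω) f / algebraMap (Polynomial Ω) (RatFunc Ω) g ∧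
    (∀ n, v (f.coeff n) ≤ 1) ∧ (∀ n, v (g.coeff n) ≤ 1) ∧
    ((∃ n, v (f.coeff n) = 1) ∨ (∃ n, v (g.coeff n) = 1)) ∧
    ratfuncDegree
      (algebraMap (Polynomial (resField v hv)) (RatFunc (resField v hv)) (polyReduce v hv f) /
        algebraMap (Polynomial (resField v hv)) (RatFunc (resField v hv)) (polyReduce v hv g))
      = ratfuncDegree φ

/-- `∑_{i=0}^{n} fᵢ P^i Q^{n-i}` : evaluation of the degree-`n` homogenization of `f`
at the pair of polynomials `(P, Q)`. -/
def homogEval {F : Type} [Field F] (n : ℕ) (f P Q : Polynomial F) : Polynomial F :=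
  ∑ i ∈ Finset.range (n + 1), Polynomial.C (f.coeff i) * P ^ i * Q ^ (n - i)

/-- The conjugate `h ∘ φ ∘ h⁻¹` of a rational function `φ` by the Möbius transformation
`h(z) = (az + b)/(cz + d)` (meaningful when `ad - bc ≠ 0`). -/
def moebiusConj {F : Type} [Field F] (a b c d : F) (φ : RatFunc F) : RatFunc F :=
  let D := ratfuncDegree φ
  let P : Polynomial F := Polynomial.C d * Polynomial.X - Polynomial.C b
  let Q : Polynomial F := -Polynomial.C c * Polynomial.X + Polynomial.C a
  let N := homogEval D φ.num P Q
  let M := homogEval D φ.denom P Q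
  algebraMap (Polynomial F) (RatFunc F) (Polynomial.C a * N + Polynomial.C b * M) /
    algebraMap (Polynomial F) (RatFunc F) (Polynomial.C c * N + Polynomial.C d * M)

/-- The image of a rational function over `K` in the rational functions over an
extension field. -/
def ratfuncMap {K F : Type} [Field K] [Field F] (σ : K →+* F) (φ : RatFunc K) : RatFunc F :=
  algebraMap (Polynomial F) (RatFunc F) (φ.num.map σ) /
    algebraMap (Polynomial F) (RatFunc F) (φ.denom.map σ)

/-- Evaluation of a rational function at a point of `P¹ = F ∪ {∞}`. -/
def evalP1 {F : Type} [Field F] (φ : RatFunc F) : OnePoint F → OnePoint F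
  | OnePoint.infty =>
      if φ.denom.natDegree < φ.num.natDegree then OnePoint.infty
      else if φ.num.natDegree < φ.denom.natDegree then ((0 : F) : OnePoint F)
      else ((φ.num.leadingCoeff / φ.denom.leadingCoeff : F) : OnePoint F)
  | (x : F) =>
      if φ.denom.eval x = 0 then OnePoint.infty
      else ((φ.num.eval x / φ.denom.eval x : F) : OnePoint F)

/-- The Möbius transformation `z ↦ (az+b)/(cz+d)` as a map on `P¹` (meaningful when
`ad - bc ≠ 0`). -/
def moebiusP1 {F : Type} [Field F] (a b c d : F) : OnePoint F → OnePoint F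
  | OnePoint.infty => if c = 0 then OnePoint.infty else ((a / c : F) : OnePoint F)
  | (x : F) =>
      if c * x + d = 0 then OnePoint.infty
      else (((a * x + b) / (c * x + d) : F) : OnePoint F)

/-- The open disk `D(b,r)`, viewed inside `P¹`. -/
def openDiskP1 (v : AbsoluteValue Ω ℝ) (b : Ω) (r : ℝ) : Set (OnePoint Ω) :=
  {x | ∃ y : Ω, x = (y : OnePoint Ω) ∧ v (y - b) < r}

/-- The complement of the closed disk `D̄(c,r)`, viewed inside `P¹` (it contains `∞`). -/
def outerComponent (v : AbsoluteValue Ω ℝ) (c : Ω) (r : ℝ) : Set (OnePoint Ω) :=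
  insert OnePoint.infty {x | ∃ y : Ω, x = (y : OnePoint Ω) ∧ r < v (y - c)}

/-- `U` is a connected component of the complement of the type II point `ζ(c,r)`:
either an open disk `D(b,r)` with `b ∈ D̄(c,r)`, or the complement of `D̄(c,r)`. -/
def IsComponentOf (v : AbsoluteValue Ω ℝ) (c : Ω) (r : ℝ) (U : Set (OnePoint Ω)) : Prop :=
  (∃ b : Ω, v (b - c) ≤ r ∧ U = openDiskP1 v b r) ∨ U = outerComponent v c r

/-- The type II point `ζ(c,r)` is totally invariant under `φ`: `r` lies in the value group,
and for every `β` with `|β| = r`, the conjugate `z ↦ β⁻¹(φ(c + βz) - c)` has good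
reduction. -/
def TotallyInvariant (v : AbsoluteValue Ω ℝ) (hv : IsNonarchimedean v) (φ : RatFunc Ω)
    (c : Ω) (r : ℝ) : Prop :=
  (∃ β : Ω, β ≠ 0 ∧ v β = r) ∧
    ∀ β : Ω, v β = r → HasGoodReduction v hv (moebiusConj 1 (-c) 0 β φ)

/-- The multiplicity of `x` as a preimage of `y` under `φ`, on `P¹`. -/
def multAt {F : Type} [Field F] (φ : RatFunc F) : OnePoint F → OnePoint F → ℕ
  | (x : F), (y : F) => (φ.num - Polynomial.C y * φ.denom).rootMultiplicity x
  | (x : F), OnePoint.infty => φ.denom.rootMultiplicity x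
  | OnePoint.infty, (y : F) =>
      ratfuncDegree φ - (φ.num - Polynomial.C y * φ.denom).natDegree
  | OnePoint.infty, OnePoint.infty => φ.num.natDegree - φ.denom.natDegree

/-- The multiplier of `φ` at a finite fixed point `x`: the value `φ'(x)`. -/
def multiplierFin {F : Type} [Field F] (φ : RatFunc F) (x : F) : F :=
  ((Polynomial.derivative φ.num).eval x * φ.denom.eval x -
      φ.num.eval x * (Polynomial.derivative φ.denom).eval x) / (φ.denom.eval x) ^ 2

/-- The multiplier of `φ` at a fixed point of `P¹`; at `∞` it is computed after
conjugating by `z ↦ 1/z`. -/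
def multiplier {F : Type} [Field F] (φ : RatFunc F) : OnePoint F → F
  | (x : F) => multiplierFin φ x
  | OnePoint.infty => multiplierFin (moebiusConj 0 1 1 0 φ) 0

/-- The standard (non-archimedean) chordal metric on `P¹`. -/
def chordal (v : AbsoluteValue Ω ℝ) : OnePoint Ω → OnePoint Ω → ℝ
  | (x : Ω), (y : Ω) => v (x - y) / (max 1 (v x) * max 1 (v y))
  | (x : Ω), OnePoint.infty => 1 / max 1 (v x)
  | OnePoint.infty, (y : Ω) => 1 / max 1 (v y)
  | OnePoint.infty, OnePoint.infty => 0

/-- The value group `|L^×| ⊆ ℝ^×` of a subfield `L` of `Ω`. -/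
def valueGroup (v : AbsoluteValue Ω ℝ) (L : Subfield Ω) : Subgroup ℝˣ where
  carrier := {r : ℝˣ | ∃ x : Ω, x ≠ 0 ∧ x ∈ L ∧ v x = (r : ℝ)}
  one_mem' := ⟨1, one_ne_zero, L.one_mem, by simp [v.map_one]⟩
  mul_mem' := by
    rintro r s ⟨x, hx0, hxL, hxv⟩ ⟨y, hy0, hyL, hyv⟩
    exact ⟨x * y, mul_ne_zero hx0 hy0, L.mul_mem hxL hyL, by simp [v.map_mul, hxv, hyv]⟩
  inv_mem' := by
    rintro r ⟨x, hx0, hxL, hxv⟩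
    exact ⟨x⁻¹, inv_ne_zero hx0, L.inv_mem hxL, by simp [map_inv₀ v, hxv]⟩


/-- The bound `B(p,d)` of Theorem A. -/
def Bbound (p d : ℕ) : ℕ :=
  if p.Prime ∧ 3 ≤ d ∧ p ∣ d then p ^ (d.factorization p) * (d - 1)
  else if p.Prime ∧ 3 ≤ d ∧ p ∣ (d - 1) then d * p ^ ((d - 1).factorization p)
  else d + 1

/-- There exists `h ∈ PGL(2, L)` such that `h ∘ φ ∘ h⁻¹` has good reduction,
for `φ` viewed over `Ω` and `L` a subfield of `Ω`. -/
def GoodReductionOver (v : AbsoluteValue Ω ℝ) (hv : IsNonarchimedean v) (L : Subfield Ω)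
    (φ : RatFunc Ω) : Prop :=
  ∃ a b c d : Ω, a ∈ L ∧ b ∈ L ∧ c ∈ L ∧ d ∈ L ∧ a * d - b * c ≠ 0 ∧
    HasGoodReduction v hv (moebiusConj a b c d φ)

/-- `φ ∈ K(z)` has potentially good reduction: it is conjugate over some finite
extension of `K` (inside the algebraically closed field `Ω`) to a map of good
reduction. -/
def PotentiallyGoodReduction (v : AbsoluteValue Ω ℝ) (hv : IsNonarchimedean v) (K : Type)
    [Field K] [Algebra K Ω] (φ : RatFunc K) : Prop :=
  ∃ L : IntermediateField K Ω, FiniteDimensional K L ∧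
    GoodReductionOver v hv L.toSubfield (ratfuncMap (algebraMap K Ω) φ)

/-- `x` is a point of `P¹(K) = K ∪ {∞}`, viewed inside `P¹(Ω)`. -/
def IsP1Pt (K : Type) {Ω : Type} [Field K] [Field Ω] [Algebra K Ω] (x : OnePoint Ω) : Prop :=
  x = OnePoint.infty ∨ ∃ a : K, x = ((algebraMap K Ω a : Ω) : OnePoint Ω)

/-- `x ∈ P¹(K̄)` with `[K(x):K] ≤ n` (convention: `K(∞) = K`). -/
def P1AlgDegLE (K : Type) {Ω : Type} [Field K] [Field Ω] [Algebra K Ω]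
    (x : OnePoint Ω) (n : ℕ) : Prop :=
  x = OnePoint.infty ∨
    ∃ a : Ω, x = (a : OnePoint Ω) ∧ IsAlgebraic K a ∧
      Module.finrank K (IntermediateField.adjoin K {a}) ≤ n

/-- The extension `K(α)/K` is totally ramified (of degree equal to its
ramification index). -/
def AdjoinTotallyRamified (v : AbsoluteValue Ω ℝ) (K : Type) [Field K] [Algebra K Ω]
    (α : Ω) : Prop :=
  Module.finrank K (IntermediateField.adjoin K ({α} : Set Ω)) =
    Subgroup.relIndex (valueGroup v (algebraMap K Ω).fieldRange)
      (valueGroup v (IntermediateField.adjoin K ({α} : Set Ω)).toSubfield)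

/-- The set `|K| = {|x| : x ∈ K} ⊆ ℝ` of absolute values of elements of `K`. -/
def absSet (v : AbsoluteValue Ω ℝ) (K : Type) [Field K] [Algebra K Ω] : Set ℝ :=
  {r : ℝ | ∃ x : K, v (algebraMap K Ω x) = r}


/-- The value group `|K^×| = {|x| : x ∈ K, x ≠ 0} ⊆ ℝ` of `K`, as a set. -/
def absSetNZ (v : AbsoluteValue Ω ℝ) (K : Type) [Field K] [Algebra K Ω] : Set ℝ :=
  {r : ℝ | ∃ x : K, x ≠ 0 ∧ v (algebraMap K Ω x) = r}

/-- `x ∈ P¹(K̄)` with `[K(x):K] ≤ n` and `K(x)/K` totally ramified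
(convention: `K(∞) = K`). -/
def P1AlgDegLERam (v : AbsoluteValue Ω ℝ) (K : Type) [Field K] [Algebra K Ω]
    (x : OnePoint Ω) (n : ℕ) : Prop :=
  x = OnePoint.infty ∨
    ∃ a : Ω, x = (a : OnePoint Ω) ∧ IsAlgebraic K a ∧
      Module.finrank K (IntermediateField.adjoin K ({a} : Set Ω)) ≤ n ∧
      AdjoinTotallyRamified v K a


section Helpers

lemma v_natCast_le_one (v : AbsoluteValue Ω ℝ) (hv : IsNonarchimedean v) (k : ℕ) :
    v (k : Ω) ≤ 1 := by
  induction k with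
  | zero => simp
  | succ k ih =>
      have h : ((k + 1 : ℕ) : Ω) = (k : Ω) + 1 := by push_cast; ring
      rw [h]
      exact le_trans (hv _ _) (max_le ih (le_of_eq v.map_one))

lemma v_eq_one_of_isUnit (v : AbsoluteValue Ω ℝ) (hv : IsNonarchimedean v)
    (x : integers v hv) (hx : IsUnit x) : v (x : Ω) = 1 := by
  obtain ⟨u, hu⟩ := hx
  have h1 : (u : integers v hv) * (u⁻¹ : Units (integers v hv)) = 1 := u.mul_inv
  have h2 : ((u : integers v hv) : Ω) * (((u⁻¹ : Units (integers v hv)) : integers v hv) : Ω) = 1 := by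
    exact_mod_cast congrArg (fun y : integers v hv => (y : Ω)) h1
  have hu1 : v ((u : integers v hv) : Ω) ≤ 1 := (u : integers v hv).2
  have hu2 : v (((u⁻¹ : Units (integers v hv)) : integers v hv) : Ω) ≤ 1 :=
    ((u⁻¹ : Units (integers v hv)) : integers v hv).2
  have h3 : v ((u : integers v hv) : Ω) * v (((u⁻¹ : Units (integers v hv)) : integers v hv) : Ω)
      = 1 := by rw [← v.map_mul, h2, v.map_one]
  have h4 : (1 : ℝ) ≤ v ((u : integers v hv) : Ω) := by
    nlinarith [v.nonneg ((u : integers v hv) : Ω)]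
  rw [← hu]
  exact le_antisymm hu1 h4

lemma v_natCast_eq_one (v : AbsoluteValue Ω ℝ) (hv : IsNonarchimedean v) (k : ℕ)
    (h : ((k : ℕ) : resField v hv) ≠ 0) : v ((k : ℕ) : Ω) = 1 := by
  have hres : ((k : ℕ) : resField v hv)
      = IsLocalRing.residue (integers v hv) ((k : ℕ) : integers v hv) :=
    (map_natCast (IsLocalRing.residue (integers v hv)) k).symm
  rw [hres] at h
  have hmem : ((k : ℕ) : integers v hv) ∉ IsLocalRing.maximalIdeal (integers v hv) := by
    intro hmem
    exact h (Ideal.Quotient.eq_zero_iff_mem.mpr hmem)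
  have hunit : IsUnit ((k : ℕ) : integers v hv) := by
    by_contra hnu
    exact hmem (IsLocalRing.mem_maximalIdeal _ |>.mpr hnu)
  have := v_eq_one_of_isUnit v hv _ hunit
  simpa using this

lemma zmod_choose_pow (p : ℕ) [Fact p.Prime] (e m : ℕ) (hm : ¬ p ∣ m) :
    (((p ^ e * m).choose (p ^ e) : ℕ) : ZMod p) = ((m : ℕ) : ZMod p) := by
  induction e with
  | zero => simp [Nat.choose_one_right]
  | succ e ih =>
      have hp : 0 < p := (Fact.out : p.Prime).pos
      have hd1 : p ∣ p ^ (e + 1) * m := dvd_mul_of_dvd_left (dvd_pow_self p (by omega)) m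
      have h1 : (p ^ (e + 1) * m) % p = 0 := Nat.mod_eq_zero_of_dvd hd1
      have h2 : (p ^ (e + 1)) % p = 0 :=
        Nat.mod_eq_zero_of_dvd (dvd_pow_self p (by omega))
      have h3 : p ^ (e + 1) * m / p = p ^ e * m := by
        rw [pow_succ, mul_comm (p ^ e) p, mul_assoc, Nat.mul_div_cancel_left _ hp]
      have h4 : p ^ (e + 1) / p = p ^ e := by
        rw [pow_succ, Nat.mul_div_cancel _ hp]
      have hlucas := Choose.choose_modEq_choose_mod_mul_choose_div
        (p := p) (n := p ^ (e + 1) * m) (k := p ^ (e + 1))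
      rw [h1, h2, h3, h4] at hlucas
      have hz := (ZMod.intCast_eq_intCast_iff _ _ _).mpr hlucas
      push_cast at hz
      simpa [ih] using hz

lemma v_sum_le (v : AbsoluteValue Ω ℝ) (hv : IsNonarchimedean v) {ι : Type*}
    (S : Finset ι) (f : ι → Ω) (B : ℝ) (hB : 0 ≤ B) (h : ∀ i ∈ S, v (f i) ≤ B) :
    v (∑ i ∈ S, f i) ≤ B := by
  induction S using Finset.cons_induction with
  | empty => simpa using hB
  | cons a S ha ih =>
      rw [Finset.sum_cons]
      exact le_trans (hv _ _) (max_le (h a (Finset.mem_cons_self a S))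
        (ih fun i hi => h i (Finset.mem_cons_of_mem hi)))

lemma prod_coeff_bound (v : AbsoluteValue Ω ℝ) (hv : IsNonarchimedean v) (s : ℝ) (hs : 0 < s)
    (M : Multiset Ω) : (∀ y ∈ M, v y ≤ s) → ∀ k : ℕ,
    v (((M.map (fun y => X - C y)).prod).coeff k) ≤ s ^ (Multiset.card M - k) := by
  induction M using Multiset.induction_on with
  | empty =>
      intro hM k
      simp only [Multiset.map_zero, Multiset.prod_zero, Multiset.card_zero, Nat.zero_sub,
        pow_zero, coeff_one]
      split_ifs with h
      · simp
      · simpa using zero_le_one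
  | cons y M ih =>
      intro hM k
      have hy : v y ≤ s := hM y (Multiset.mem_cons_self y M)
      have hM' : ∀ z ∈ M, v z ≤ s := fun z hz => hM z (Multiset.mem_cons_of_mem hz)
      set P := (M.map (fun y => X - C y)).prod with hP
      have hPdeg : P.natDegree = Multiset.card M := natDegree_multiset_prod_X_sub_C_eq_card M
      rw [Multiset.map_cons, Multiset.prod_cons, Multiset.card_cons]
      set c := Multiset.card M with hc
      have hs0 : (0:ℝ) ≤ s := le_of_lt hs
      cases k with
      | zero =>
          rw [mul_coeff_zero]
          have h0 : (X - C y).coeff 0 = -y := by simp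
          rw [h0, v.map_mul, v.map_neg]
          calc v y * v (P.coeff 0) ≤ s * s ^ (c - 0) :=
                mul_le_mul hy (ih hM' 0) (v.nonneg _) hs0
            _ = s ^ (c + 1 - 0) := by rw [Nat.sub_zero, Nat.sub_zero, pow_succ, mul_comm]
      | succ j =>
          have hco : ((X - C y) * P).coeff (j + 1) = P.coeff j - y * P.coeff (j + 1) := by
            rw [sub_mul, coeff_sub, coeff_X_mul, coeff_C_mul]
          rw [hco, sub_eq_add_neg]
          refine le_trans (hv _ _) (max_le ?_ ?_)
          · have := ih hM' j
            have harith : c + 1 - (j + 1) = c - j := by omega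
            rw [harith]
            exact this
          · rw [v.map_neg, v.map_mul]
            by_cases hj : j + 1 ≤ c
            · calc v y * v (P.coeff (j + 1)) ≤ s * s ^ (c - (j + 1)) :=
                    mul_le_mul hy (ih hM' (j + 1)) (v.nonneg _) hs0
                _ = s ^ (c + 1 - (j + 1)) := by
                    rw [← pow_succ']
                    congr 1
                    omega
            · have hz : P.coeff (j + 1) = 0 :=
                coeff_eq_zero_of_natDegree_lt (by rw [hPdeg]; omega)
              rw [hz, v.map_zero, mul_zero]
              positivity

lemma taylor_hasseDeriv_comm {R : Type} [CommRing R] (a : R) (k : ℕ) (f : R[X]) :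
    taylor a (hasseDeriv k f) = hasseDeriv k (taylor a f) := by
  ext j
  rw [taylor_coeff, hasseDeriv_coeff, taylor_coeff]
  have h := LinearMap.congr_fun (hasseDeriv_comp (R := R) j k) f
  simp only [LinearMap.comp_apply, LinearMap.smul_apply] at h
  rw [h, eval_smul, nsmul_eq_mul, Nat.choose_symm_add]

lemma hasseDeriv_map' {R S : Type} [CommRing R] [CommRing S] (σ : R →+* S) (k : ℕ)
    (f : R[X]) : (hasseDeriv k f).map σ = hasseDeriv k (f.map σ) := by
  ext n
  simp [coeff_map, hasseDeriv_coeff]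

end Helpers

/-- **Lemma (pextn).** If all roots of a degree-`n` polynomial `f ∈ K[z]` lie in a closed
disk `V ⊆ ℂ_v`, then `V` contains a point `α` with `[K(α):K] ≤ p^{v_p(n)}`. -/
theorem point_in_root_disk {K Ω : Type} [Field K] [Field Ω] [Algebra K Ω] [IsAlgClosed Ω]
    (v : AbsoluteValue Ω ℝ) (hv : IsNonarchimedean v)
    (p : ℕ) (hp : CharP (resField v hv) p)
    (f : Polynomial K) (n : ℕ) (hn : 1 ≤ n) (hdeg : f.natDegree = n)
    (a : Ω) (s : ℝ) (hs : 0 < s)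
    (hroots : ∀ x : Ω, Polynomial.aeval x f = 0 → v (x - a) ≤ s) :
    ∃ α : Ω, v (α - a) ≤ s ∧ IsAlgebraic K α ∧
      Module.finrank K (IntermediateField.adjoin K ({α} : Set Ω)) ≤ p ^ (n.factorization p) := by
  haveI := hp
  set e := n.factorization p with he
  set q := p ^ e with hqdef
  have key : ((n.choose q : ℕ) : resField v hv) ≠ 0 ∧ 1 ≤ q ∧ q ≤ n := by
    rcases CharP.char_is_prime_or_zero (resField v hv) p with hpp | hp0
    · haveI : Fact p.Prime := ⟨hpp⟩
      have hq1 : 1 ≤ q := Nat.one_le_pow _ _ hpp.pos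
      have hqdvd : q ∣ n := Nat.ordProj_dvd n p
      have hqn : q ≤ n := Nat.le_of_dvd (by omega) hqdvd
      have hmul : q * (n / q) = n := Nat.ordProj_mul_ordCompl_eq_self n p
      have hndc : ¬ p ∣ n / q := Nat.not_dvd_ordCompl hpp (by omega)
      have h1 : (((q * (n / q)).choose q : ℕ) : ZMod p) = ((n / q : ℕ) : ZMod p) := by
        rw [hqdef]
        exact zmod_choose_pow p e (n / q) hndc
      rw [hmul] at h1
      have hznz : ((n.choose q : ℕ) : ZMod p) ≠ 0 := by
        rw [h1, Ne, ZMod.natCast_eq_zero_iff]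
        exact hndc
      have hnd : ¬ p ∣ n.choose q := by
        rwa [Ne, ZMod.natCast_eq_zero_iff] at hznz
      refine ⟨?_, hq1, hqn⟩
      rw [Ne, CharP.cast_eq_zero_iff (resField v hv) p]
      exact hnd
    · subst hp0
      have he0 : e = 0 := Nat.factorization_eq_zero_of_not_prime n (by norm_num)
      have hq1 : q = 1 := by rw [hqdef, he0, pow_zero]
      haveI : CharZero (resField v hv) := CharP.charP_to_charZero _
      refine ⟨?_, by omega, by omega⟩
      rw [hq1, Nat.choose_one_right]
      exact Nat.cast_ne_zero.mpr (by omega)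
  obtain ⟨hkey, hq1, hqn⟩ := key
  have hvchoose : v ((n.choose q : ℕ) : Ω) = 1 := v_natCast_eq_one v hv _ hkey
  have hchoosene : ((n.choose q : ℕ) : Ω) ≠ 0 := by
    intro h0; rw [h0, v.map_zero] at hvchoose; norm_num at hvchoose
  set σ := algebraMap K Ω with hσ
  have hinj : Function.Injective σ := σ.injective
  set F := f.map σ with hF
  have hFdeg : F.natDegree = n := by rw [hF, natDegree_map_eq_of_injective hinj, hdeg]
  set T := taylor a F with hT
  have hTdeg : T.natDegree = n := by rw [hT, natDegree_taylor, hFdeg]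
  have hT0 : T ≠ 0 := fun h => by rw [h, natDegree_zero] at hTdeg; omega
  set c' := T.leadingCoeff with hc'
  have hc'0 : c' ≠ 0 := leadingCoeff_ne_zero.mpr hT0
  have hcard : Multiset.card T.roots = n := by
    rw [splits_iff_card_roots.mp (IsAlgClosed.splits T), hTdeg]
  have hTprod : C c' * (T.roots.map fun y => X - C y).prod = T :=
    C_leadingCoeff_mul_prod_multiset_X_sub_C (by rw [hcard, hTdeg])
  have hTy : ∀ y ∈ T.roots, v y ≤ s := by
    intro y hy
    have h1 : T.eval y = 0 := (mem_roots'.mp hy).2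
    have h2 : F.eval (y + a) = 0 := by rw [hT, taylor_eval] at h1; exact h1
    have h3 : (aeval (y + a)) f = 0 := by rw [aeval_def, ← eval_map]; exact h2
    have := hroots (y + a) h3
    simpa using this
  have hTcoeff : ∀ k, v (T.coeff k) ≤ v c' * s ^ (n - k) := by
    intro k
    conv_lhs => rw [← hTprod]
    rw [coeff_C_mul, v.map_mul]
    have h1 := prod_coeff_bound v hv s hs T.roots hTy k
    rw [hcard] at h1
    exact mul_le_mul_of_nonneg_left h1 (v.nonneg _)
  set G := hasseDeriv (n - q) F with hG
  set H := taylor a G with hH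
  have hHT : H = hasseDeriv (n - q) T := by rw [hH, hG, hT, taylor_hasseDeriv_comm]
  have hHcoeff : ∀ j, H.coeff j
      = (((j + (n - q)).choose (n - q) : ℕ) : Ω) * T.coeff (j + (n - q)) := by
    intro j; rw [hHT, hasseDeriv_coeff]
  have hTn : T.coeff n = c' := by rw [← hTdeg]; exact coeff_natDegree
  have hHq : H.coeff q = ((n.choose q : ℕ) : Ω) * c' := by
    rw [hHcoeff]
    have h1 : q + (n - q) = n := by omega
    rw [h1, hTn, Nat.choose_symm hqn]
  have hHq' : v (H.coeff q) = v c' := by rw [hHq, v.map_mul, hvchoose, one_mul]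
  have hHqne : H.coeff q ≠ 0 := by rw [hHq]; exact mul_ne_zero hchoosene hc'0
  have hHhigh : ∀ j, q < j → H.coeff j = 0 := by
    intro j hj
    rw [hHcoeff]
    have h1 : T.coeff (j + (n - q)) = 0 :=
      coeff_eq_zero_of_natDegree_lt (by rw [hTdeg]; omega)
    rw [h1, mul_zero]
  have hHdeg : H.natDegree = q :=
    le_antisymm (natDegree_le_iff_coeff_eq_zero.mpr hHhigh) (le_natDegree_of_ne_zero hHqne)
  have hH0 : H ≠ 0 := fun h => hHqne (by rw [h, coeff_zero])
  have hHdegne : H.degree ≠ 0 := by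
    rw [degree_eq_natDegree hH0, hHdeg]
    exact_mod_cast (by omega : q ≠ 0)
  obtain ⟨β, hβ⟩ := IsAlgClosed.exists_root H hHdegne
  have hβ0 : H.eval β = 0 := hβ
  have hvβ : v β ≤ s := by
    by_contra hcon
    push_neg at hcon
    have hvβpos : 0 < v β := lt_trans hs hcon
    have hvc'pos : 0 < v c' := v.pos hc'0
    set B := v c' * (s * v β ^ (q - 1)) with hB
    have hB0 : 0 ≤ B := by positivity
    have hrest : v (∑ j ∈ Finset.range q, H.coeff j * β ^ j) ≤ B := by
      apply v_sum_le v hv _ _ _ hB0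
      intro j hj
      rw [Finset.mem_range] at hj
      rw [v.map_mul, v.map_pow]
      have h1 : v (H.coeff j) ≤ v c' * s ^ (q - j) := by
        rw [hHcoeff, v.map_mul]
        have h2 : v ((((j + (n - q)).choose (n - q) : ℕ)) : Ω) ≤ 1 := v_natCast_le_one v hv _
        have h3 : v (T.coeff (j + (n - q))) ≤ v c' * s ^ (n - (j + (n - q))) := hTcoeff _
        have h4 : n - (j + (n - q)) = q - j := by omega
        rw [h4] at h3
        calc v (((j + (n - q)).choose (n - q) : ℕ) : Ω) * v (T.coeff (j + (n - q)))
            ≤ 1 * (v c' * s ^ (q - j)) :=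
              mul_le_mul h2 h3 (v.nonneg _) (by norm_num)
          _ = v c' * s ^ (q - j) := one_mul _
      calc v (H.coeff j) * v β ^ j ≤ (v c' * s ^ (q - j)) * v β ^ j :=
            mul_le_mul_of_nonneg_right h1 (by positivity)
        _ = v c' * (s * (s ^ (q - 1 - j) * v β ^ j)) := by
            rw [show q - j = (q - 1 - j) + 1 by omega, pow_succ]
            ring
        _ ≤ v c' * (s * (v β ^ (q - 1 - j) * v β ^ j)) := by
            gcongr
        _ = B := by rw [hB, ← pow_add, show q - 1 - j + j = q - 1 by omega]
    have htop : v (H.coeff q * β ^ q) = v c' * v β ^ q := by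
      rw [v.map_mul, v.map_pow, hHq']
    have hBlt : B < v c' * v β ^ q := by
      rw [hB]
      apply mul_lt_mul_of_pos_left ?_ hvc'pos
      calc s * v β ^ (q - 1) < v β * v β ^ (q - 1) :=
            mul_lt_mul_of_pos_right hcon (by positivity)
        _ = v β ^ q := by rw [← pow_succ', show q - 1 + 1 = q by omega]
    have hsum : H.eval β
        = ∑ j ∈ Finset.range q, H.coeff j * β ^ j + H.coeff q * β ^ q := by
      rw [eval_eq_sum_range' (by omega : H.natDegree < q + 1), Finset.sum_range_succ]
    have hub : v (H.coeff q * β ^ q)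
        ≤ max (v (H.eval β)) (v (∑ j ∈ Finset.range q, H.coeff j * β ^ j)) := by
      have hrw : H.coeff q * β ^ q
          = H.eval β + (-(∑ j ∈ Finset.range q, H.coeff j * β ^ j)) := by
        rw [hsum]; ring
      rw [hrw]
      exact le_trans (hv _ _) (by rw [v.map_neg])
    have hfin : v c' * v β ^ q ≤ B := by
      rw [← htop]
      refine le_trans hub ?_
      rw [hβ0, v.map_zero]
      exact max_le hB0 hrest
    linarith
  set g := hasseDeriv (n - q) f with hg
  have hgmap : g.map σ = G := by rw [hg, hG, hF, hasseDeriv_map']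
  have haeval : (aeval (β + a)) g = 0 := by
    rw [aeval_def, ← eval_map, hgmap]
    have h1 : G.eval (β + a) = H.eval β := by rw [hH, taylor_eval]
    rw [h1, hβ0]
  have hg0 : g ≠ 0 := by
    intro h0
    apply hHqne
    have hG0 : G = 0 := by rw [← hgmap, h0, Polynomial.map_zero]
    rw [hH, hG0]
    simp
  have halg : IsAlgebraic K (β + a) := ⟨g, hg0, haeval⟩
  refine ⟨β + a, by simpa using hvβ, halg, ?_⟩
  have hint : IsIntegral K (β + a) := halg.isIntegral
  rw [IntermediateField.adjoin.finrank hint]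
  have hmd : (minpoly K (β + a)).degree ≤ g.degree :=
    minpoly.degree_le_of_ne_zero K _ hg0 haeval
  have hGdeg : G.natDegree = q := by
    have h1 := natDegree_taylor G a
    rw [← hH] at h1
    rw [← h1, hHdeg]
  have hgdeg : g.natDegree = q := by
    rw [← hGdeg, ← hgmap, natDegree_map_eq_of_injective hinj]
  calc (minpoly K (β + a)).natDegree ≤ g.natDegree := natDegree_le_natDegree hmd
    _ = q := hgdeg
    _ ≤ p ^ n.factorization p := le_of_eq (by rw [hqdef, he])

end PGR
end
end

section
/- Let K be a field with non-archimedean absolute value, and let φ ∈ K(z) be a rational function of degree d ≥ 2 with a totally invariant type II point ζ(c,r). Let U and V be distinct components of the complement of ζ(c,r) that both contain points of P¹(K), and suppose φ(U) ⊆ U while φ(V) ⊆ U. Then there is a point α ∈ P¹(K̄) ∖ (U ∪ V) such that [K(α):K] ≤ d. -/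
open Polynomial

noncomputable section

namespace PGR

open scoped Classical

variable {Ω : Type} [Field Ω]

/-- Distinct components of the complement of `ζ(c,r)` are disjoint. -/
theorem components_disjoint {Ω : Type} [Field Ω] (v : AbsoluteValue Ω ℝ)
    (hv : IsNonarchimedean v) (c : Ω) (r : ℝ) {U V : Set (OnePoint Ω)}
    (hU : IsComponentOf v c r U) (hV : IsComponentOf v c r V) (hUV : U ≠ V) :
    ∀ x, x ∈ U → x ∈ V → False := by
  have ultra : ∀ x y z : Ω, v (x - z) ≤ max (v (x - y)) (v (y - z)) := by
    intro x y z
    have : x - z = (x - y) + (y - z) := by ring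
    rw [this]; exact hv _ _
  have keydisk : ∀ b b' : Ω, (∃ x, x ∈ openDiskP1 v b r ∧ x ∈ openDiskP1 v b' r) →
      openDiskP1 v b r = openDiskP1 v b' r := by
    intro b b' ⟨x, hx, hx'⟩
    obtain ⟨y, rfl, hy⟩ := hx
    obtain ⟨y', hy'e, hy'⟩ := hx'
    rw [OnePoint.coe_eq_coe] at hy'e
    subst hy'e
    have hbb' : v (b - b') < r := by
      have h1 := ultra b y b'
      rw [show v (b - y) = v (y - b) by rw [← v.map_neg]; ring_nf] at h1
      exact lt_of_le_of_lt h1 (max_lt hy hy')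
    have hbb'2 : v (b' - b) < r := by
      rwa [show v (b' - b) = v (b - b') by rw [← v.map_neg]; ring_nf]
    ext z
    constructor
    · rintro ⟨w, rfl, hw⟩
      exact ⟨w, rfl, lt_of_le_of_lt (ultra w b b') (max_lt hw hbb')⟩
    · rintro ⟨w, rfl, hw⟩
      exact ⟨w, rfl, lt_of_le_of_lt (ultra w b' b) (max_lt hw hbb'2)⟩
  have keyout : ∀ b : Ω, v (b - c) ≤ r → ∀ x, x ∈ openDiskP1 v b r →
      x ∈ outerComponent v c r → False := by
    intro b hb x hx hx'
    obtain ⟨y, rfl, hy⟩ := hx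
    rcases hx' with h | ⟨y', hy'e, hy'⟩
    · exact OnePoint.coe_ne_infty y h
    · rw [OnePoint.coe_eq_coe] at hy'e
      subst hy'e
      exact absurd (le_trans (ultra y b c) (max_le hy.le hb)) (not_le_of_gt hy')
  rcases hU with ⟨b, hb, rfl⟩ | rfl
  · rcases hV with ⟨b', hb', rfl⟩ | rfl
    · intro x hxU hxV
      exact hUV (keydisk b b' ⟨x, hxU, hxV⟩)
    · intro x hxU hxV
      exact keyout b hb x hxU hxV
  · rcases hV with ⟨b', hb', rfl⟩ | rfl
    · intro x hxU hxV
      exact keyout b' hb' x hxV hxU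
    · exact absurd rfl hUV

/-- Structure of `num` and `denom` of a quotient of coprime polynomials. -/
theorem num_denom_of_div {F : Type} [Field F] (f g : Polynomial F) (hcop : IsCoprime f g)
    (hg : g ≠ 0) :
    ∃ u : F, u ≠ 0 ∧
      (algebraMap (Polynomial F) (RatFunc F) f / algebraMap (Polynomial F) (RatFunc F) g).num
        = f * Polynomial.C u ∧
      (algebraMap (Polynomial F) (RatFunc F) f / algebraMap (Polynomial F) (RatFunc F) g).denom
        = g * Polynomial.C u := by
  set Φ := algebraMap (Polynomial F) (RatFunc F) f / algebraMap (Polynomial F) (RatFunc F) g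
    with hΦ
  have hgz : algebraMap (Polynomial F) (RatFunc F) g ≠ 0 := RatFunc.algebraMap_ne_zero hg
  have hdz : algebraMap (Polynomial F) (RatFunc F) Φ.denom ≠ 0 :=
    RatFunc.algebraMap_ne_zero Φ.denom_ne_zero
  have h0 : algebraMap (Polynomial F) (RatFunc F) Φ.num /
      algebraMap (Polynomial F) (RatFunc F) Φ.denom =
      algebraMap (Polynomial F) (RatFunc F) f / algebraMap (Polynomial F) (RatFunc F) g :=
    (RatFunc.num_div_denom Φ).trans hΦ
  rw [div_eq_div_iff hdz hgz] at h0
  have hcross : Φ.num * g = f * Φ.denom := by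
    apply RatFunc.algebraMap_injective F
    rw [map_mul, map_mul]
    exact h0
  have hcop2 : IsCoprime Φ.num Φ.denom := Φ.isCoprime_num_denom
  have hdvd1 : Φ.denom ∣ g := by
    refine (hcop2.symm).dvd_of_dvd_mul_left ?_
    rw [hcross]
    exact dvd_mul_left Φ.denom f
  have hdvd2 : g ∣ Φ.denom := by
    refine (hcop.symm).dvd_of_dvd_mul_left ?_
    rw [← hcross]
    exact dvd_mul_left g Φ.num
  obtain ⟨p, hp⟩ := hdvd2
  have hpu : IsUnit p := by
    have : g * p ∣ g * 1 := by rw [mul_one, ← hp]; exact hdvd1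
    exact isUnit_of_dvd_one ((mul_dvd_mul_iff_left hg).mp this)
  obtain ⟨u, huu, hCu⟩ := Polynomial.isUnit_iff.mp hpu
  refine ⟨u, huu.ne_zero, ?_, ?_⟩
  · have hden : Φ.denom = g * Polynomial.C u := by rw [hp, hCu]
    have : Φ.num * g = (f * Polynomial.C u) * g := by
      rw [hcross, hden]; ring
    exact mul_right_cancel₀ hg this
  · rw [hp, hCu]

/-- A root of (the base-change of) a nonzero polynomial of degree at most `d` over `K`
gives a point of `P¹` of algebraic degree at most `d`. -/
theorem p1AlgDegLE_of_root {K Ω : Type} [Field K] [Field Ω] [Algebra K Ω]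
    (Q : Polynomial K) (hQ : Q ≠ 0) (d : ℕ) (hQd : Q.natDegree ≤ d)
    (α : Ω) (hroot : (Q.map (algebraMap K Ω)).eval α = 0) :
    P1AlgDegLE K (α : OnePoint Ω) d := by
  have haev : Polynomial.aeval α Q = 0 := by
    rwa [Polynomial.aeval_def, ← Polynomial.eval_map]
  have halg : IsAlgebraic K α := ⟨Q, hQ, haev⟩
  refine Or.inr ⟨α, rfl, halg, ?_⟩
  rw [IntermediateField.adjoin.finrank halg.isIntegral]
  exact le_trans (Polynomial.natDegree_le_of_dvd (minpoly.dvd K α haev) hQ) hQd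

/-- **Theorem (twocomps1).** If `U, V` are distinct components of the complement of a
totally invariant type II point, both meeting `P¹(K)`, with `U` fixed and `φ(V) ⊆ U`,
then there is `α ∈ P¹(K̄) ∖ (U ∪ V)` with `[K(α):K] ≤ d`. -/
theorem two_components_ext_d {K Ω : Type} [Field K] [Field Ω] [Algebra K Ω]
    [IsAlgClosed Ω]
    (v : AbsoluteValue Ω ℝ) (hv : IsNonarchimedean v)
    (φ : RatFunc K) (d : ℕ) (hd : 2 ≤ d) (hdeg : ratfuncDegree φ = d)
    (c : Ω) (r : ℝ)
    (hinv : TotallyInvariant v hv (ratfuncMap (algebraMap K Ω) φ) c r)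
    (U V : Set (OnePoint Ω)) (hU : IsComponentOf v c r U) (hV : IsComponentOf v c r V)
    (hUV : U ≠ V)
    (hKU : ∃ x ∈ U, IsP1Pt K x) (hKV : ∃ x ∈ V, IsP1Pt K x)
    (hfixU : Set.MapsTo (evalP1 (ratfuncMap (algebraMap K Ω) φ)) U U)
    (hVU : Set.MapsTo (evalP1 (ratfuncMap (algebraMap K Ω) φ)) V U) :
    ∃ α : OnePoint Ω, α ∉ U ∧ α ∉ V ∧ P1AlgDegLE K α d := by
  classical
  set A := algebraMap K Ω with hA
  set Φ := ratfuncMap A φ with hΦdef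
  have hdisj := components_disjoint v hv c r hU hV hUV
  obtain ⟨xV, hxV, hxVK⟩ := hKV
  have hout : ∀ α : OnePoint Ω, evalP1 Φ α = xV → α ∉ U ∧ α ∉ V := by
    intro α hα
    constructor
    · intro hαU; exact hdisj xV (hα ▸ hfixU hαU) hxV
    · intro hαV; exact hdisj xV (hα ▸ hVU hαV) hxV
  set fΩ := φ.num.map A with hfΩ
  set gΩ := φ.denom.map A with hgΩ
  have hΦ : Φ = algebraMap (Polynomial Ω) (RatFunc Ω) fΩ /
      algebraMap (Polynomial Ω) (RatFunc Ω) gΩ := rfl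
  have hcopK : IsCoprime φ.num φ.denom := φ.isCoprime_num_denom
  have hcopΩ : IsCoprime fΩ gΩ := by
    have := hcopK.map (Polynomial.mapRingHom A)
    simpa [Polynomial.coe_mapRingHom] using this
  have hgne : gΩ ≠ 0 := Polynomial.map_ne_zero φ.denom_ne_zero
  obtain ⟨u, hu, hnum, hdenom⟩ := num_denom_of_div fΩ gΩ hcopΩ hgne
  rw [← hΦ] at hnum hdenom
  have ndf : fΩ.natDegree = φ.num.natDegree := Polynomial.natDegree_map A
  have ndg : gΩ.natDegree = φ.denom.natDegree := Polynomial.natDegree_map A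
  have ndΦn : Φ.num.natDegree = φ.num.natDegree := by
    rw [hnum, Polynomial.natDegree_mul_C hu, ndf]
  have ndΦd : Φ.denom.natDegree = φ.denom.natDegree := by
    rw [hdenom, Polynomial.natDegree_mul_C hu, ndg]
  have hmax : max φ.num.natDegree φ.denom.natDegree = d := hdeg
  have hcop_eval : ∀ α : Ω, gΩ.eval α = 0 → fΩ.eval α = 0 → False := by
    intro α hg0 hf0
    obtain ⟨s, t, hst⟩ := hcopΩ
    have := congrArg (Polynomial.eval α) hst
    simp [hf0, hg0] at this
  rcases hxVK with hxinf | ⟨a, hxa⟩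
  · -- xV = ∞ : use roots of the denominator
    subst hxinf
    by_cases hc : φ.denom.natDegree = 0
    · -- denominator constant; ∞ maps to ∞
      have hn1 : φ.num.natDegree = d := by omega
      have heval : evalP1 Φ OnePoint.infty = OnePoint.infty := by
        show (if Φ.denom.natDegree < Φ.num.natDegree then OnePoint.infty
          else if Φ.num.natDegree < Φ.denom.natDegree then ((0 : Ω) : OnePoint Ω)
          else ((Φ.num.leadingCoeff / Φ.denom.leadingCoeff : Ω) : OnePoint Ω)) = OnePoint.infty
        rw [if_pos]
        rw [ndΦn, ndΦd, hn1, hc]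
        omega
      obtain ⟨h1, h2⟩ := hout _ heval
      exact ⟨OnePoint.infty, h1, h2, Or.inl rfl⟩
    · -- denominator nonconstant: it has a root α
      have hdegne : gΩ.degree ≠ 0 := by
        rw [Polynomial.degree_eq_natDegree hgne]
        intro h
        apply hc
        rw [← ndg]
        exact_mod_cast h
      obtain ⟨α, hα⟩ := IsAlgClosed.exists_root gΩ hdegne
      have hα' : gΩ.eval α = 0 := hα
      have heval : evalP1 Φ (α : OnePoint Ω) = OnePoint.infty := by
        show (if Φ.denom.eval α = 0 then OnePoint.infty
          else ((Φ.num.eval α / Φ.denom.eval α : Ω) : OnePoint Ω)) = OnePoint.infty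
        rw [if_pos]
        rw [hdenom, Polynomial.eval_mul, hα', zero_mul]
      obtain ⟨h1, h2⟩ := hout _ heval
      refine ⟨(α : OnePoint Ω), h1, h2, ?_⟩
      exact p1AlgDegLE_of_root φ.denom φ.denom_ne_zero d (by omega) α hα'
  · -- xV = A a : use roots of num - a·denom
    subst hxa
    set P := φ.num - Polynomial.C a * φ.denom with hP
    have hP0 : P ≠ 0 := by
      intro h
      have hnd : φ.num = Polynomial.C a * φ.denom := by
        have := sub_eq_zero.mp h
        exact this
      have hdvd : φ.denom ∣ φ.num := ⟨Polynomial.C a, by rw [hnd, mul_comm]⟩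
      have hun : IsUnit φ.denom := hcopK.isUnit_of_dvd' hdvd dvd_rfl
      have h2 : φ.denom.natDegree = 0 := Polynomial.natDegree_eq_zero_of_isUnit hun
      have h1 : φ.num.natDegree = 0 := by
        rw [hnd]
        have := Polynomial.natDegree_C_mul_le a φ.denom
        omega
      omega
    have hPle : P.natDegree ≤ d := by
      have h1 := Polynomial.natDegree_sub_le φ.num (Polynomial.C a * φ.denom)
      have h2 := Polynomial.natDegree_C_mul_le a φ.denom
      rw [hP]
      omega
    have hPΩ : P.map A = fΩ - Polynomial.C (A a) * gΩ := by
      rw [hP, Polynomial.map_sub, Polynomial.map_mul, Polynomial.map_C]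
    by_cases hPc : P.natDegree = 0
    · -- the point at infinity maps to `A a`
      have hd0 : 0 < d := by omega
      have hcoeffd : P.coeff d = 0 :=
        Polynomial.coeff_eq_zero_of_natDegree_lt (by omega)
      have hcoeffP : ∀ n, P.coeff n = φ.num.coeff n - a * φ.denom.coeff n := by
        intro n
        rw [hP]
        simp [Polynomial.coeff_sub, Polynomial.coeff_C_mul]
      rcases lt_trichotomy φ.num.natDegree φ.denom.natDegree with hlt | heqn | hgt
      · -- denominator has larger degree: forces a = 0
        have hn2 : φ.denom.natDegree = d := by omega
        have hnc : φ.num.coeff d = 0 :=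
          Polynomial.coeff_eq_zero_of_natDegree_lt (by omega)
        have hdclead : φ.denom.coeff d ≠ 0 := by
          rw [← hn2]
          exact Polynomial.coeff_ne_zero_of_eq_degree
            (Polynomial.degree_eq_natDegree φ.denom_ne_zero)
        have ha0 : a = 0 := by
          have := hcoeffP d
          rw [hcoeffd, hnc, zero_sub] at this
          have h0 : a * φ.denom.coeff d = 0 := neg_eq_zero.mp this.symm
          rcases mul_eq_zero.mp h0 with h | h
          · exact h
          · exact absurd h hdclead
        have heval : evalP1 Φ OnePoint.infty = ((0 : Ω) : OnePoint Ω) := by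
          show (if Φ.denom.natDegree < Φ.num.natDegree then OnePoint.infty
            else if Φ.num.natDegree < Φ.denom.natDegree then ((0 : Ω) : OnePoint Ω)
            else ((Φ.num.leadingCoeff / Φ.denom.leadingCoeff : Ω) : OnePoint Ω))
            = ((0 : Ω) : OnePoint Ω)
          rw [if_neg (by omega), if_pos (by omega)]
        have heval' : evalP1 Φ OnePoint.infty = ((A a : Ω) : OnePoint Ω) := by
          rw [heval, ha0, map_zero]
        obtain ⟨h1, h2⟩ := hout _ heval'
        exact ⟨OnePoint.infty, h1, h2, Or.inl rfl⟩
      · -- equal degrees d: leading coefficients give value `a` at ∞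
        have hn1 : φ.num.natDegree = d := by omega
        have hn2 : φ.denom.natDegree = d := by omega
        have hnum0 : φ.num ≠ 0 := by
          intro h
          rw [h] at hn1
          simp at hn1
          omega
        have hlead : φ.num.leadingCoeff = a * φ.denom.leadingCoeff := by
          have := hcoeffP d
          rw [hcoeffd] at this
          have h1 : φ.num.coeff d = φ.num.leadingCoeff := by
            rw [Polynomial.leadingCoeff, hn1]
          have h2 : φ.denom.coeff d = φ.denom.leadingCoeff := by
            rw [Polynomial.leadingCoeff, hn2]
          rw [h1, h2] at this
          exact sub_eq_zero.mp this.symm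
        have hdl : φ.denom.leadingCoeff ≠ 0 :=
          Polynomial.leadingCoeff_ne_zero.mpr φ.denom_ne_zero
        have hleadΦn : Φ.num.leadingCoeff = A φ.num.leadingCoeff * u := by
          rw [hnum, Polynomial.leadingCoeff_mul, Polynomial.leadingCoeff_C,
            hfΩ, Polynomial.leadingCoeff_map]
        have hleadΦd : Φ.denom.leadingCoeff = A φ.denom.leadingCoeff * u := by
          rw [hdenom, Polynomial.leadingCoeff_mul, Polynomial.leadingCoeff_C,
            hgΩ, Polynomial.leadingCoeff_map]
        have hdlΩ : A φ.denom.leadingCoeff ≠ 0 := by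
          simpa using hdl
        have heval : evalP1 Φ OnePoint.infty = ((A a : Ω) : OnePoint Ω) := by
          show (if Φ.denom.natDegree < Φ.num.natDegree then OnePoint.infty
            else if Φ.num.natDegree < Φ.denom.natDegree then ((0 : Ω) : OnePoint Ω)
            else ((Φ.num.leadingCoeff / Φ.denom.leadingCoeff : Ω) : OnePoint Ω))
            = ((A a : Ω) : OnePoint Ω)
          rw [if_neg (by omega), if_neg (by omega)]
          congr 1
          rw [hleadΦn, hleadΦd, hlead, map_mul]
          field_simp
        obtain ⟨h1, h2⟩ := hout _ heval
        exact ⟨OnePoint.infty, h1, h2, Or.inl rfl⟩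
      · -- numerator has larger degree: contradiction with `P` constant
        exfalso
        have hn1 : φ.num.natDegree = d := by omega
        have hdc : φ.denom.coeff d = 0 :=
          Polynomial.coeff_eq_zero_of_natDegree_lt (by omega)
        have hnclead : φ.num.coeff d ≠ 0 := by
          rw [← hn1]
          exact Polynomial.coeff_ne_zero_of_eq_degree
            (Polynomial.degree_eq_natDegree (by
              intro h
              rw [h] at hn1
              simp at hn1
              omega))
        have := hcoeffP d
        rw [hcoeffd, hdc, mul_zero, sub_zero] at this
        exact hnclead this.symm
    · -- `P` nonconstant: it has a root α, a preimage of `A a`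
      have hPm0 : P.map A ≠ 0 := Polynomial.map_ne_zero hP0
      have hdegne : (P.map A).degree ≠ 0 := by
        rw [Polynomial.degree_eq_natDegree hPm0]
        intro h
        apply hPc
        have : (P.map A).natDegree = P.natDegree := Polynomial.natDegree_map A
        rw [← this]
        exact_mod_cast h
      obtain ⟨α, hα⟩ := IsAlgClosed.exists_root (P.map A) hdegne
      have hα' : (P.map A).eval α = 0 := hα
      have hfg : fΩ.eval α = A a * gΩ.eval α := by
        have := hα'
        rw [hPΩ, Polynomial.eval_sub, Polynomial.eval_mul, Polynomial.eval_C,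
          sub_eq_zero] at this
        exact this
      have hgα : gΩ.eval α ≠ 0 := by
        intro h0
        apply hcop_eval α h0
        rw [hfg, h0, mul_zero]
      have hΦdα : Φ.denom.eval α ≠ 0 := by
        rw [hdenom, Polynomial.eval_mul, Polynomial.eval_C]
        exact mul_ne_zero hgα hu
      have heval : evalP1 Φ (α : OnePoint Ω) = ((A a : Ω) : OnePoint Ω) := by
        show (if Φ.denom.eval α = 0 then OnePoint.infty
          else ((Φ.num.eval α / Φ.denom.eval α : Ω) : OnePoint Ω))
          = ((A a : Ω) : OnePoint Ω)
        rw [if_neg hΦdα]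
        congr 1
        rw [hnum, hdenom, Polynomial.eval_mul, Polynomial.eval_mul, Polynomial.eval_C,
          hfg]
        field_simp
      obtain ⟨h1, h2⟩ := hout _ heval
      exact ⟨(α : OnePoint Ω), h1, h2, p1AlgDegLE_of_root P hP0 d hPle α hα'⟩

end PGR
end
end

section
/- Let φ ∈ ℂ_v(z) be a rational function with no poles in D(0,1) = {x ∈ ℂ_v : |x| < 1}, and write φ(z) = Σ_{n≥0} c_n z^n as a power series converging on D(0,1). Suppose there is an integer ℓ ≥ 2 such that |c_n| < 1 for all n < ℓ, |c_ℓ| = 1, and |c_n| ≤ 1 for all n > ℓ. Then φ has exactly one fixed point in D(0,1): there is a unique x ∈ ℂ_v with |x| < 1 and φ(x) = x. -/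
open Polynomial

noncomputable section

namespace PGR

open scoped Classical

variable {Ω : Type} [Field Ω]

lemma nav_add_eq (v : AbsoluteValue Ω ℝ) (hv : IsNonarchimedean v)
    {a b : Ω} (h : v a < v b) : v (a + b) = v b := by
  refine le_antisymm (le_trans (hv a b) (max_le h.le le_rfl)) ?_
  by_contra hc
  push_neg at hc
  have h3 := hv (a + b) (-a)
  rw [v.map_neg] at h3
  have h4 : a + b + -a = b := by ring
  rw [h4] at h3
  exact absurd h3 (not_le.mpr (max_lt hc h))

lemma nav_sum_lt (v : AbsoluteValue Ω ℝ) (hv : IsNonarchimedean v)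
    {ι : Type*} (s : Finset ι) (f : ι → Ω) {c : ℝ} (hc : 0 < c)
    (h : ∀ i ∈ s, v (f i) < c) : v (∑ i ∈ s, f i) < c := by
  classical
  induction s using Finset.cons_induction with
  | empty => simpa using hc
  | cons a s ha ih =>
    rw [Finset.sum_cons]
    exact lt_of_le_of_lt (hv _ _)
      (max_lt (h a (by simp)) (ih fun i hi => h i (by simp [hi])))

lemma abs_eval_eq [IsAlgClosed Ω] (v : AbsoluteValue Ω ℝ) (p : Polynomial Ω) (x : Ω) :
    v (p.eval x) = v p.leadingCoeff * ((p.roots.map fun r => v (x - r)).prod) := by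
  rcases eq_or_ne p 0 with rfl | hp
  · simp
  conv_lhs => rw [← Polynomial.C_leadingCoeff_mul_prod_multiset_X_sub_C
      (Polynomial.splits_iff_card_roots.mp (IsAlgClosed.splits p))]
  rw [Polynomial.eval_mul, Polynomial.eval_C, map_mul]
  congr 1
  rw [Polynomial.eval_multiset_prod, map_multiset_prod, Multiset.map_map, Multiset.map_map]
  apply congrArg Multiset.prod
  apply Multiset.map_congr rfl
  intro r hr
  simp

lemma abs_eval_eq_zero_eval [IsAlgClosed Ω] (v : AbsoluteValue Ω ℝ) (hv : IsNonarchimedean v)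
    {p : Polynomial Ω} (hroots : ∀ r ∈ p.roots, 1 ≤ v r) {x : Ω} (hx : v x < 1) :
    v (p.eval x) = v (p.eval 0) := by
  rw [abs_eval_eq v p x, abs_eval_eq v p 0]
  congr 2
  apply Multiset.map_congr rfl
  intro r hr
  have h1 : 1 ≤ v r := hroots r hr
  have hxr : v (x - r) = v r := by
    rw [sub_eq_add_neg, nav_add_eq v hv (by rw [v.map_neg]; exact lt_of_lt_of_le hx h1),
      v.map_neg]
  rw [hxr]
  simp [v.map_neg]

lemma exists_abs_between [IsAlgClosed Ω] (v : AbsoluteValue Ω ℝ) {a : Ω}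
    (ha0 : a ≠ 0) (ha : v a < 1) {r0 : ℝ} (h0 : 0 ≤ r0) (h1 : r0 < 1) :
    ∃ x : Ω, r0 < v x ∧ v x < 1 := by
  have hpos : 0 < v a := v.pos ha0
  have htend : Filter.Tendsto (fun n : ℕ => r0 ^ n) Filter.atTop (nhds 0) :=
    tendsto_pow_atTop_nhds_zero_of_lt_one h0 h1
  obtain ⟨n, hn1, hn2⟩ :=
    ((htend.eventually_lt_const hpos).and (Filter.eventually_ge_atTop 1)).exists
  obtain ⟨x, hx⟩ := IsAlgClosed.exists_pow_nat_eq a (n := n) (by omega)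
  have hvx : v x ^ n = v a := by rw [← map_pow, hx]
  have hx1 : v x < 1 := by
    by_contra hc
    push_neg at hc
    have h2 : (1:ℝ) ≤ v x ^ n := one_le_pow₀ hc
    rw [hvx] at h2
    linarith
  have hrx : r0 < v x := by
    by_contra hc
    push_neg at hc
    have h2 : v a ≤ r0 ^ n := by rw [← hvx]; exact pow_le_pow_left₀ (v.nonneg x) hc n
    linarith
  exact ⟨x, hrx, hx1⟩



/-- A rational function on the open unit disk with Weierstrass data as in the hypothesis
(`|cₙ| < 1` for `n < ℓ`, `|c_ℓ| = 1`, `|cₙ| ≤ 1` for `n > ℓ`, with `ℓ ≥ 2`) has exactly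
one fixed point in the open unit disk. -/
theorem unique_attracting_fixed_point {Ω : Type} [Field Ω] [IsAlgClosed Ω]
    (v : AbsoluteValue Ω ℝ) (hv : IsNonarchimedean v)
    (φ : RatFunc Ω)
    (hnopole : ∀ x : Ω, v x < 1 → φ.denom.eval x ≠ 0)
    (cs : ℕ → Ω)
    (hcs : ∀ x : Ω, v x < 1 →
      Filter.Tendsto (fun N => v (φ.num.eval x / φ.denom.eval x -
        ∑ i ∈ Finset.range N, cs i * x ^ i)) Filter.atTop (nhds 0))
    (ℓ : ℕ) (hl : 2 ≤ ℓ)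
    (hlt : ∀ n : ℕ, n < ℓ → v (cs n) < 1)
    (heq : v (cs ℓ) = 1)
    (hle : ∀ n : ℕ, ℓ < n → v (cs n) ≤ 1) :
    ∃! x : Ω, v x < 1 ∧ φ.num.eval x / φ.denom.eval x = x := by
  classical
  by_cases htriv : ∀ x : Ω, v x < 1 → x = 0
  · -- "trivial valuation" case: the disk is {0}
    have h00 : v (0:Ω) < 1 := by simp
    have hc0 : cs 0 = 0 := htriv _ (hlt 0 (by omega))
    have hphi0 : φ.num.eval 0 / φ.denom.eval 0 = cs 0 := by
      have h := hcs 0 h00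
      have heq' : ∀ᶠ N in Filter.atTop,
          v (φ.num.eval 0 / φ.denom.eval 0 - ∑ i ∈ Finset.range N, cs i * (0:Ω) ^ i)
          = v (φ.num.eval 0 / φ.denom.eval 0 - cs 0) := by
        filter_upwards [Filter.eventually_ge_atTop 1] with N hN
        have hsum : ∑ i ∈ Finset.range N, cs i * (0:Ω) ^ i = cs 0 := by
          rw [Finset.sum_eq_single 0]
          · simp
          · intro b _ hb
            simp [zero_pow hb]
          · intro h0
            exact absurd (Finset.mem_range.mpr (by omega)) h0
        rw [hsum]
      have h3 : Filter.Tendsto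
          (fun _ : ℕ => v (φ.num.eval 0 / φ.denom.eval 0 - cs 0)) Filter.atTop (nhds 0) :=
        Filter.Tendsto.congr' heq' h
      have h4 : (0:ℝ) = v (φ.num.eval 0 / φ.denom.eval 0 - cs 0) :=
        tendsto_nhds_unique h3 tendsto_const_nhds
      have h5 : φ.num.eval 0 / φ.denom.eval 0 - cs 0 = 0 := by
        have := h4.symm
        rwa [v.eq_zero] at this
      exact sub_eq_zero.mp h5
    exact ⟨0, ⟨h00, by rw [hphi0, hc0]⟩, fun y hy => htriv y hy.1⟩
  · push_neg at htriv
    obtain ⟨a, ha1, ha0⟩ := htriv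
    have hd0 : φ.denom.eval 0 ≠ 0 := hnopole 0 (by simp)
    have hdroots : ∀ r ∈ φ.denom.roots, 1 ≤ v r := by
      intro r hr
      by_contra hc
      push_neg at hc
      exact hnopole r hc ((Polynomial.mem_roots'.mp hr).2)
    set F : Polynomial Ω := φ.num - Polynomial.X * φ.denom with hF
    set D := v (φ.denom.eval 0) with hD
    have hDpos : 0 < D := v.pos hd0
    have hc00 : 0 ≤ v (cs 0) := v.nonneg _
    have hc01 : v (cs 0) < 1 := hlt 0 (by omega)
    -- key analytic computation
    have key : ∀ x : Ω, v (cs 0) < v x → v x < 1 → v (F.eval x) = v x * D := by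
      intro x hxc hx1
      have hvxpos : 0 < v x := lt_of_le_of_lt hc00 hxc
      have hdx : φ.denom.eval x ≠ 0 := hnopole x hx1
      set φx := φ.num.eval x / φ.denom.eval x with hφx
      obtain ⟨N, hNlt, hN2⟩ :=
        (((hcs x hx1).eventually_lt_const hvxpos).and (Filter.eventually_ge_atTop 2)).exists
      set S := ∑ i ∈ Finset.range N, cs i * x ^ i with hS
      have h1mem : (1:ℕ) ∈ Finset.range N := Finset.mem_range.mpr (by omega)
      have hsplit : S = cs 1 * x ^ 1 + ∑ i ∈ (Finset.range N).erase 1, cs i * x ^ i :=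
        (Finset.add_sum_erase _ _ h1mem).symm
      have hrest : v (∑ i ∈ (Finset.range N).erase 1, cs i * x ^ i) < v x := by
        apply nav_sum_lt v hv _ _ hvxpos
        intro i hi
        rcases Finset.mem_erase.mp hi with ⟨hi1, _⟩
        rcases Nat.eq_zero_or_pos i with rfl | hip
        · calc v (cs 0 * x ^ 0) = v (cs 0) := by simp
            _ < v x := hxc
        · have hi2 : 2 ≤ i := by omega
          have hcsle : v (cs i) ≤ 1 := by
            rcases lt_trichotomy i ℓ with h | h | h
            · exact (hlt i h).le
            · rw [h]; exact heq.le
            · exact hle i h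
          calc v (cs i * x ^ i) = v (cs i) * v x ^ i := by rw [map_mul, map_pow]
            _ ≤ 1 * v x ^ i := mul_le_mul_of_nonneg_right hcsle (pow_nonneg (v.nonneg x) i)
            _ = v x ^ i := one_mul _
            _ ≤ v x ^ 2 := pow_le_pow_of_le_one (v.nonneg x) hx1.le hi2
            _ < v x := by rw [pow_two]; exact mul_lt_of_lt_one_left hvxpos hx1
      have hc1 : v (cs 1 - 1) = 1 := by
        rw [sub_eq_add_neg, nav_add_eq v hv (by simpa using hlt 1 (by omega))]
        simp
      have hSx : v (S - x) = v x := by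
        have hdec : S - x = (∑ i ∈ (Finset.range N).erase 1, cs i * x ^ i) + (cs 1 - 1) * x := by
          rw [hsplit]; ring
        rw [hdec, nav_add_eq v hv (by rw [map_mul, hc1, one_mul]; exact hrest),
          map_mul, hc1, one_mul]
      have hφxx : v (φx - x) = v x := by
        have hdecomp : φx - x = (φx - S) + (S - x) := by ring
        rw [hdecomp, nav_add_eq v hv (by rw [hSx]; exact hNlt)]
        exact hSx
      have hfx : φ.num.eval x = φx * φ.denom.eval x := (div_mul_cancel₀ _ hdx).symm
      have hFx : F.eval x = (φx - x) * φ.denom.eval x := by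
        rw [hF]
        simp only [Polynomial.eval_sub, Polynomial.eval_mul, Polynomial.eval_X]
        rw [hfx]; ring
      rw [hFx, map_mul, hφxx, abs_eval_eq_zero_eval v hv hdroots hx1]
    -- F ≠ 0
    obtain ⟨x0, hx0a, hx0b⟩ := exists_abs_between v ha0 ha1 hc00 hc01
    have hF0 : F ≠ 0 := by
      intro h
      have hk := key x0 hx0a hx0b
      rw [h] at hk
      simp only [Polynomial.eval_zero, map_zero] at hk
      have : 0 < v x0 * D := mul_pos (lt_of_le_of_lt hc00 hx0a) hDpos
      linarith
    set R := F.roots with hR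
    set Rin := R.filter (fun ρ => v ρ < 1) with hRin
    set Rout := R.filter (fun ρ => ¬ (v ρ < 1)) with hRout
    have hRsum : Rin + Rout = R := Multiset.filter_add_not _ _
    set m := Multiset.card Rin with hm
    set P := (Rout.map v).prod with hP
    have hPpos : 0 < P := by
      apply Multiset.prod_pos
      intro r hr
      obtain ⟨ρ, hρ, rfl⟩ := Multiset.mem_map.mp hr
      have h1 := (Multiset.mem_filter.mp hρ).2
      linarith [le_of_not_gt h1]
    have hlcpos : 0 < v F.leadingCoeff := v.pos (Polynomial.leadingCoeff_ne_zero.mpr hF0)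
    set T : Finset ℝ := insert (v (cs 0)) (Rin.map v).toFinset with hT
    have hTne : T.Nonempty := ⟨_, Finset.mem_insert_self _ _⟩
    set r0 := T.max' hTne with hr0
    have hr0c : v (cs 0) ≤ r0 := Finset.le_max' _ _ (Finset.mem_insert_self _ _)
    have hr0nonneg : 0 ≤ r0 := le_trans hc00 hr0c
    have hr0lt : r0 < 1 := by
      rw [hr0, Finset.max'_lt_iff]
      intro y hy
      rcases Finset.mem_insert.mp hy with rfl | hy2
      · exact hc01
      · obtain ⟨ρ, hρ, rfl⟩ := Multiset.mem_map.mp (Multiset.mem_toFinset.mp hy2)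
        exact (Multiset.mem_filter.mp hρ).2
    have hr0b : ∀ ρ ∈ Rin, v ρ ≤ r0 := fun ρ hρ =>
      Finset.le_max' _ _
        (Finset.mem_insert_of_mem (Multiset.mem_toFinset.mpr (Multiset.mem_map_of_mem v hρ)))
    have eval_formula : ∀ x : Ω, r0 < v x → v x < 1 →
        v (F.eval x) = (v F.leadingCoeff * P) * v x ^ m := by
      intro x hxr hx1
      rw [abs_eval_eq v F x]
      have hsplit2 : ((R.map fun ρ => v (x - ρ)).prod)
          = ((Rin.map fun ρ => v (x - ρ)).prod) * ((Rout.map fun ρ => v (x - ρ)).prod) := by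
        rw [← hRsum, Multiset.map_add, Multiset.prod_add]
      have hin : ((Rin.map fun ρ => v (x - ρ)).prod) = v x ^ m := by
        have hmap : Rin.map (fun ρ => v (x - ρ)) = Rin.map (fun _ => v x) :=
          Multiset.map_congr rfl (fun ρ hρ => by
            have h2 : v ρ ≤ r0 := hr0b ρ hρ
            rw [sub_eq_add_neg, add_comm,
              nav_add_eq v hv (by rw [v.map_neg]; exact lt_of_le_of_lt h2 hxr)])
        rw [hmap, Multiset.map_const', Multiset.prod_replicate]
      have hout : ((Rout.map fun ρ => v (x - ρ)).prod) = P := by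
        apply congrArg Multiset.prod
        apply Multiset.map_congr rfl
        intro ρ hρ
        have h1 : ¬ v ρ < 1 := (Multiset.mem_filter.mp hρ).2
        have h2 : v x < v (-ρ) := by
          rw [v.map_neg]; exact lt_of_lt_of_le hx1 (le_of_not_gt h1)
        rw [sub_eq_add_neg, nav_add_eq v hv h2, v.map_neg]
      rw [hsplit2, hin, hout]; ring
    obtain ⟨x1, hx1a, hx1b⟩ := exists_abs_between v ha0 ha1 hr0nonneg hr0lt
    obtain ⟨x2, hx2a, hx2b⟩ := exists_abs_between v ha0 ha1
      (le_trans hr0nonneg hx1a.le) hx1b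
    have e1 : (v F.leadingCoeff * P) * v x1 ^ m = v x1 * D := by
      rw [← eval_formula x1 hx1a hx1b]
      exact key x1 (lt_of_le_of_lt hr0c hx1a) hx1b
    have e2 : (v F.leadingCoeff * P) * v x2 ^ m = v x2 * D := by
      rw [← eval_formula x2 (lt_trans hx1a hx2a) hx2b]
      exact key x2 (lt_of_le_of_lt hr0c (lt_trans hx1a hx2a)) hx2b
    have ht1pos : 0 < v x1 := lt_of_le_of_lt hr0nonneg hx1a
    have ht2pos : 0 < v x2 := lt_trans ht1pos hx2a
    have hmain : v x1 * v x2 ^ m = v x2 * v x1 ^ m := by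
      have h1 : (v F.leadingCoeff * P) * v x1 ^ m * v x2 ^ m = v x1 * D * v x2 ^ m := by
        rw [e1]
      have h2 : (v F.leadingCoeff * P) * v x2 ^ m * v x1 ^ m = v x2 * D * v x1 ^ m := by
        rw [e2]
      have h3 : v x1 * D * v x2 ^ m = v x2 * D * v x1 ^ m := by rw [← h1, ← h2]; ring
      have h4 : (v x1 * v x2 ^ m) * D = (v x2 * v x1 ^ m) * D := by ring_nf; ring_nf at h3; linarith
      exact mul_right_cancel₀ (ne_of_gt hDpos) h4
    have hm1 : m = 1 := by
      rcases Nat.lt_trichotomy m 1 with h | h | h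
      · exfalso
        have hm0 : m = 0 := by omega
        rw [hm0] at hmain
        simp at hmain
        linarith [hx2a]
      · exact h
      · exfalso
        obtain ⟨k, hk⟩ : ∃ k, m = k + 2 := ⟨m - 2, by omega⟩
        rw [hk, pow_succ, pow_succ] at hmain
        have hne : v x1 ^ (k+1) < v x2 ^ (k+1) :=
          pow_lt_pow_left₀ hx2a ht1pos.le (by omega)
        have h12 : (0:ℝ) < v x1 * v x2 := mul_pos ht1pos ht2pos
        have h' : (v x1 * v x2) * v x2 ^ (k+1) = (v x1 * v x2) * v x1 ^ (k+1) := by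
          ring_nf; ring_nf at hmain; linarith
        have := mul_left_cancel₀ (ne_of_gt h12) h'
        linarith
    obtain ⟨ρ0, hρ0⟩ := Multiset.card_eq_one.mp (show Multiset.card Rin = 1 by rw [← hm]; exact hm1)
    have hρ0mem : ρ0 ∈ Rin := by rw [hρ0]; exact Multiset.mem_singleton_self _
    obtain ⟨hρ0R, hρ0lt⟩ := Multiset.mem_filter.mp hρ0mem
    have hρ0eval : F.eval ρ0 = 0 := (Polynomial.mem_roots'.mp hρ0R).2
    have hdρ0 : φ.denom.eval ρ0 ≠ 0 := hnopole _ hρ0lt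
    refine ⟨ρ0, ⟨hρ0lt, ?_⟩, ?_⟩
    · have hnum : φ.num.eval ρ0 = ρ0 * φ.denom.eval ρ0 := by
        have h1 := hρ0eval
        rw [hF] at h1
        simp only [Polynomial.eval_sub, Polynomial.eval_mul, Polynomial.eval_X] at h1
        exact sub_eq_zero.mp h1
      rw [hnum, mul_div_assoc, div_self hdρ0, mul_one]
    · rintro y ⟨hy1, hy2⟩
      have hdy : φ.denom.eval y ≠ 0 := hnopole y hy1
      have hFy : F.eval y = 0 := by
        rw [hF]
        simp only [Polynomial.eval_sub, Polynomial.eval_mul, Polynomial.eval_X]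
        rw [div_eq_iff hdy] at hy2
        rw [hy2]; ring
      have hyR : y ∈ Rin :=
        Multiset.mem_filter.mpr ⟨Polynomial.mem_roots'.mpr ⟨hF0, hFy⟩, hy1⟩
      rw [hρ0] at hyR
      exact Multiset.mem_singleton.mp hyR

end PGR
end
end

section
/- Let K be a field with non-archimedean absolute value and let α ∈ K̄ be nonzero. Then there is a smallest positive integer n such that |α|^n ∈ |K^×|; choose b ∈ K with |b| = |α|^n and β ∈ K̄ with β^n = b. Then |β| = |α|, [K(β):K] = n, and the extension K(β)/K is totally ramified. -/
open Polynomial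

noncomputable section

namespace PGR

open scoped Classical

variable {Ω : Type} [Field Ω]

section Aux

variable {Kf Ωf : Type} [Field Kf] [Field Ωf] [Algebra Kf Ωf]

/-- In a zero sum with a nonzero term, two distinct nonzero terms have equal absolute value. -/
lemma aux_exists_pair (v : AbsoluteValue Ωf ℝ) (hv : IsNonarchimedean v)
    (s : Finset ℕ) (g : ℕ → Ωf) (h0 : ∑ i ∈ s, g i = 0) (j : ℕ) (hj : j ∈ s) (hgj : g j ≠ 0) :
    ∃ i ∈ s, ∃ k ∈ s, i < k ∧ g i ≠ 0 ∧ g k ≠ 0 ∧ v (g i) = v (g k) := by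
  classical
  set s' := s.filter (fun i => g i ≠ 0) with hs'
  have hsub : ∀ {i}, i ∈ s' → i ∈ s ∧ g i ≠ 0 := fun h => Finset.mem_filter.mp h
  have hsum : ∑ i ∈ s', g i = 0 := by
    rw [hs', Finset.sum_filter_ne_zero, h0]
  have hjs' : j ∈ s' := Finset.mem_filter.mpr ⟨hj, hgj⟩
  obtain ⟨i0, hi0, hmax⟩ := s'.exists_max_image (fun i => v (g i)) ⟨j, hjs'⟩
  have herase : ∑ i ∈ s'.erase i0, g i = - g i0 := by
    have h := Finset.add_sum_erase s' g hi0
    rw [hsum] at h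
    exact eq_neg_of_add_eq_zero_right h
  have hne : (s'.erase i0).Nonempty := by
    rcases (s'.erase i0).eq_empty_or_nonempty with h | h
    · rw [h, Finset.sum_empty] at herase
      exact absurd (neg_eq_zero.mp herase.symm) (hsub hi0).2
    · exact h
  obtain ⟨m, hm, hle⟩ := IsNonarchimedean.finset_image_add_of_nonempty hv g hne
  have hms' : m ∈ s' := Finset.mem_of_mem_erase hm
  have hmi0 : m ≠ i0 := Finset.ne_of_mem_erase hm
  have heq : v (g m) = v (g i0) := by
    have h1 : v (g i0) ≤ v (g m) := by
      rw [← v.map_neg (g i0), ← herase]; exact hle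
    exact le_antisymm (hmax m hms') h1
  rcases lt_or_gt_of_ne hmi0 with h | h
  · exact ⟨m, (hsub hms').1, i0, (hsub hi0).1, h, (hsub hms').2, (hsub hi0).2, heq⟩
  · exact ⟨i0, (hsub hi0).1, m, (hsub hms').1, h, (hsub hi0).2, (hsub hms').2, heq.symm⟩

/-- A sum whose nonzero terms have pairwise distinct absolute values has the absolute
value of one of its terms. -/
lemma aux_dominant (v : AbsoluteValue Ωf ℝ) (hv : IsNonarchimedean v)
    (s : Finset ℕ) (g : ℕ → Ωf)
    (hdist : ∀ i ∈ s, ∀ j ∈ s, i ≠ j → g i ≠ 0 → g j ≠ 0 → v (g i) ≠ v (g j))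
    (hne : ∑ i ∈ s, g i ≠ 0) :
    ∃ i ∈ s, g i ≠ 0 ∧ v (∑ i ∈ s, g i) = v (g i) := by
  classical
  set s' := s.filter (fun i => g i ≠ 0) with hs'
  have hsub : ∀ {i}, i ∈ s' → i ∈ s ∧ g i ≠ 0 := fun h => Finset.mem_filter.mp h
  have hsum : ∑ i ∈ s', g i = ∑ i ∈ s, g i := by
    rw [hs', Finset.sum_filter_ne_zero]
  have hne' : s'.Nonempty := by
    rcases s'.eq_empty_or_nonempty with h | h
    · rw [h, Finset.sum_empty] at hsum; exact absurd hsum.symm hne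
    · exact h
  obtain ⟨i0, hi0, hmax⟩ := s'.exists_max_image (fun i => v (g i)) hne'
  refine ⟨i0, (hsub hi0).1, (hsub hi0).2, ?_⟩
  have hsplit : ∑ i ∈ s', g i = g i0 + ∑ i ∈ s'.erase i0, g i :=
    (Finset.add_sum_erase s' g hi0).symm
  rcases (s'.erase i0).eq_empty_or_nonempty with h | h
  · rw [← hsum, hsplit, h, Finset.sum_empty, add_zero]
  · obtain ⟨m, hm, hle⟩ := IsNonarchimedean.finset_image_add_of_nonempty hv g h
    have hms' : m ∈ s' := Finset.mem_of_mem_erase hm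
    have hmi0 : m ≠ i0 := Finset.ne_of_mem_erase hm
    have hlt : v (∑ i ∈ s'.erase i0, g i) < v (g i0) :=
      lt_of_le_of_lt hle (lt_of_le_of_ne (hmax m hms')
        (hdist m (hsub hms').1 i0 (hsub hi0).1 hmi0 (hsub hms').2 (hsub hi0).2))
    rw [← hsum, hsplit, IsNonarchimedean.add_eq_max_of_ne hv hlt.ne']
    exact max_eq_left hlt.le

/-- From an equality of term values, a power of `v α` lies in the value group of `K`. -/
lemma aux_ratio_mem (v : AbsoluteValue Ωf ℝ) {α : Ωf} (hα0 : α ≠ 0)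
    {c1 c2 : Kf} (h1 : c1 ≠ 0) (h2 : c2 ≠ 0) {i j : ℕ} (hij : i < j)
    (h : v (algebraMap Kf Ωf c1) * v α ^ i = v (algebraMap Kf Ωf c2) * v α ^ j) :
    (v α) ^ (j - i) ∈ absSetNZ v Kf := by
  have hvα : 0 < v α := v.pos hα0
  have h2' : algebraMap Kf Ωf c2 ≠ 0 := by
    simpa using (algebraMap Kf Ωf).injective.ne h2
  have hv2 : 0 < v (algebraMap Kf Ωf c2) := v.pos h2'
  have hti : (v α) ^ i ≠ 0 := pow_ne_zero _ hvα.ne'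
  have hj : j - i + i = j := Nat.sub_add_cancel hij.le
  have h' : v (algebraMap Kf Ωf c1) = v (algebraMap Kf Ωf c2) * v α ^ (j - i) := by
    have heq : (v (algebraMap Kf Ωf c2) * v α ^ (j - i)) * v α ^ i
        = v (algebraMap Kf Ωf c2) * v α ^ j := by
      rw [mul_assoc, ← pow_add, hj]
    exact mul_right_cancel₀ hti (h.trans heq.symm)
  refine ⟨c1 / c2, div_ne_zero h1 h2, ?_⟩
  rw [map_div₀, map_div₀, h', mul_comm, mul_div_assoc, div_self hv2.ne', mul_one]

end Aux

/-- For nonzero `α ∈ K̄` there is a smallest `n ≥ 1` with `|α|^n ∈ |K^×|`; and for any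
`b ∈ K` with `|b| = |α|^n` and any `n`-th root `β` of `b`, one has `|β| = |α|`,
`[K(β):K] = n`, and `K(β)/K` is totally ramified. -/
theorem totally_ramified_same_absolute_value {K Ω : Type} [Field K] [Field Ω]
    [Algebra K Ω] [IsAlgClosed Ω]
    (v : AbsoluteValue Ω ℝ) (hv : IsNonarchimedean v)
    (α : Ω) (hα : IsAlgebraic K α) (hα0 : α ≠ 0) :
    (∃ n : ℕ, 0 < n ∧ (v α) ^ n ∈ absSetNZ v K ∧
      ∀ i : ℕ, 0 < i → i < n → (v α) ^ i ∉ absSetNZ v K) ∧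
    (∀ n : ℕ, 0 < n → (v α) ^ n ∈ absSetNZ v K →
      (∀ i : ℕ, 0 < i → i < n → (v α) ^ i ∉ absSetNZ v K) →
      ∀ b : K, v (algebraMap K Ω b) = (v α) ^ n →
      ∀ β : Ω, β ^ n = algebraMap K Ω b →
        v β = v α ∧
        Module.finrank K (IntermediateField.adjoin K ({β} : Set Ω)) = n ∧
        AdjoinTotallyRamified v K β) := by
  classical
  have hvα : 0 < v α := v.pos hα0
  have hexists : ∃ n : ℕ, 0 < n ∧ (v α) ^ n ∈ absSetNZ v K := by
    set p := minpoly K α with hp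
    have hint : IsIntegral K α := hα.isIntegral
    have hpne : p ≠ 0 := minpoly.ne_zero hint
    set d := p.natDegree with hd
    have haev : ∑ i ∈ Finset.range (d + 1), p.coeff i • α ^ i = 0 := by
      rw [← Polynomial.aeval_eq_sum_range]; exact minpoly.aeval K α
    have hgd : p.coeff d • α ^ d ≠ 0 :=
      smul_ne_zero (Polynomial.leadingCoeff_ne_zero.mpr hpne) (pow_ne_zero _ hα0)
    obtain ⟨i, hi, k, hk, hik, hgi, hgk, heq⟩ :=
      aux_exists_pair v hv _ _ haev d (Finset.self_mem_range_succ d) hgd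
    have hci : p.coeff i ≠ 0 := fun h => hgi (by simp [h])
    have hck : p.coeff k ≠ 0 := fun h => hgk (by simp [h])
    have heq' : v (algebraMap K Ω (p.coeff i)) * v α ^ i
        = v (algebraMap K Ω (p.coeff k)) * v α ^ k := by
      simpa [Algebra.smul_def, map_mul, map_pow] using heq
    exact ⟨k - i, by omega, aux_ratio_mem v hα0 hci hck hik heq'⟩
  constructor
  · let P : ℕ → Prop := fun n => 0 < n ∧ (v α) ^ n ∈ absSetNZ v K
    have hP : ∃ n, P n := hexists
    refine ⟨Nat.find hP, (Nat.find_spec hP).1, (Nat.find_spec hP).2, ?_⟩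
    intro i hi0 hilt hmem
    exact Nat.find_min hP hilt ⟨hi0, hmem⟩
  · intro n hn hmemn hminn b hb β hβn
    have hbne : b ≠ 0 := by
      rintro rfl
      rw [map_zero, v.map_zero] at hb
      exact absurd hb.symm (ne_of_gt (pow_pos hvα n))
    have haMb : algebraMap K Ω b ≠ 0 := by
      simpa using (algebraMap K Ω).injective.ne hbne
    have hβne : β ≠ 0 := by
      intro h; rw [h, zero_pow hn.ne'] at hβn; exact haMb hβn.symm
    have hvβ : v β = v α := by
      have h1 : v β ^ n = v α ^ n := by
        rw [← v.map_pow, hβn, hb]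
      exact (pow_left_inj₀ (v.nonneg β) (v.nonneg α) hn.ne').mp h1
    have haevF : (Polynomial.aeval β) (Polynomial.X ^ n - Polynomial.C b) = 0 := by
      simp [hβn]
    have hint : IsIntegral K β := ⟨Polynomial.X ^ n - Polynomial.C b,
      Polynomial.monic_X_pow_sub_C b hn.ne', by simpa [Polynomial.aeval_def] using haevF⟩
    set q := minpoly K β with hq
    set m := q.natDegree with hm
    have hm1 : 0 < m := minpoly.natDegree_pos hint
    have hFne : (Polynomial.X ^ n - Polynomial.C b : Polynomial K) ≠ 0 :=
      (Polynomial.monic_X_pow_sub_C b hn.ne').ne_zero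
    have hdvd : q ∣ Polynomial.X ^ n - Polynomial.C b := minpoly.dvd K β haevF
    have hmn : m ≤ n := by
      have h := Polynomial.natDegree_le_of_dvd hdvd hFne
      rwa [Polynomial.natDegree_X_pow_sub_C] at h
    set Q := q.map (algebraMap K Ω) with hQ
    have hqmonic : q.Monic := minpoly.monic hint
    have hQmonic : Q.Monic := hqmonic.map _
    have hQdeg : Q.natDegree = m := hqmonic.natDegree_map _
    have hsp : Polynomial.Splits Q := IsAlgClosed.splits Q
    have hprod : Q = (Q.roots.map fun r => Polynomial.X - Polynomial.C r).prod :=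
      hsp.eq_prod_roots_of_monic hQmonic
    have hcard : Multiset.card Q.roots = m := by
      rw [← hQdeg]; exact Polynomial.splits_iff_card_roots.mp hsp
    have hroot : ∀ r ∈ Q.roots, v r = v β := by
      intro r hr
      have hrr : Q.eval r = 0 := Polynomial.isRoot_of_mem_roots hr
      have hQdvd : Q ∣ (Polynomial.X ^ n - Polynomial.C (algebraMap K Ω b)) := by
        have h := Polynomial.map_dvd (algebraMap K Ω) hdvd
        simpa [Polynomial.map_sub, Polynomial.map_pow] using h
      have hrn : r ^ n = algebraMap K Ω b := by
        obtain ⟨t, ht⟩ := hQdvd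
        have h := congrArg (Polynomial.eval r) ht
        rw [Polynomial.eval_mul, hrr, zero_mul] at h
        simp only [Polynomial.eval_sub, Polynomial.eval_pow, Polynomial.eval_X,
          Polynomial.eval_C] at h
        exact sub_eq_zero.mp h
      have h1 : v r ^ n = v β ^ n := by
        rw [← v.map_pow, ← v.map_pow, hrn, hβn]
      exact (pow_left_inj₀ (v.nonneg r) (v.nonneg β) hn.ne').mp h1
    have hQeval0 : v (Q.eval 0) = v β ^ m := by
      have h1 : Q.eval 0 = (Q.roots.map fun r => -r).prod := by
        conv_lhs => rw [hprod]
        rw [Polynomial.eval_multiset_prod, Multiset.map_map]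
        congr 1
        refine Multiset.map_congr rfl ?_
        intro r _
        simp
      rw [h1, map_multiset_prod, Multiset.map_map]
      have h2 : Multiset.map (⇑v ∘ fun r => -r) Q.roots = Multiset.replicate m (v β) := by
        rw [Multiset.eq_replicate]
        refine ⟨by rw [Multiset.card_map, hcard], ?_⟩
        intro x hx
        obtain ⟨r, hr, rfl⟩ := Multiset.mem_map.mp hx
        simp only [Function.comp_apply, v.map_neg]
        exact hroot r hr
      rw [h2, Multiset.prod_replicate]
    have hcoeff0 : Q.eval 0 = algebraMap K Ω (q.coeff 0) := by
      rw [← Polynomial.coeff_zero_eq_eval_zero, hQ, Polynomial.coeff_map]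
    have hc0 : q.coeff 0 ≠ 0 := minpoly.coeff_zero_ne_zero hint hβne
    have hαm : (v α) ^ m ∈ absSetNZ v K :=
      ⟨q.coeff 0, hc0, by rw [← hcoeff0, hQeval0, hvβ]⟩
    have hmeq : m = n := by
      by_contra h
      exact hminn m hm1 (lt_of_le_of_ne hmn h) hαm
    have hfinrank : Module.finrank K (IntermediateField.adjoin K ({β} : Set Ω)) = n := by
      rw [IntermediateField.adjoin.finrank hint, ← hm, hmeq]
    have key : ∀ x : Ω, x ∈ IntermediateField.adjoin K ({β} : Set Ω) → x ≠ 0 →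
        ∃ c : K, ∃ i : ℕ, c ≠ 0 ∧ i < n ∧ v x = v (algebraMap K Ω c) * v α ^ i := by
      intro x hx hx0
      set pb := IntermediateField.adjoin.powerBasis hint with hpb
      have hdim : pb.dim = n := by
        rw [hpb, IntermediateField.adjoin.powerBasis_dim, ← hm, hmeq]
      obtain ⟨f, hfdeg, hfy⟩ :=
        pb.exists_eq_aeval (⟨x, hx⟩ : IntermediateField.adjoin K ({β} : Set Ω))
      have hgen : (IntermediateField.adjoin K ({β} : Set Ω)).val pb.gen = β := by
        rw [hpb, IntermediateField.adjoin.powerBasis_gen]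
        rfl
      have hxval : x = (Polynomial.aeval β) f := by
        calc x = (IntermediateField.adjoin K ({β} : Set Ω)).val
                (⟨x, hx⟩ : IntermediateField.adjoin K ({β} : Set Ω)) := rfl
        _ = (IntermediateField.adjoin K ({β} : Set Ω)).val
                ((Polynomial.aeval pb.gen) f) := by rw [← hfy]
        _ = (Polynomial.aeval ((IntermediateField.adjoin K ({β} : Set Ω)).val pb.gen)) f :=
              (Polynomial.aeval_algHom_apply _ _ _).symm
        _ = (Polynomial.aeval β) f := by rw [hgen]
      have hsum : x = ∑ i ∈ Finset.range (f.natDegree + 1), f.coeff i • β ^ i := by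
        rw [hxval, Polynomial.aeval_eq_sum_range]
      set g : ℕ → Ω := fun i => f.coeff i • β ^ i with hg
      have hvg : ∀ k, g k ≠ 0 →
          v (g k) = v (algebraMap K Ω (f.coeff k)) * v α ^ k := by
        intro k _
        simp only [hg, Algebra.smul_def]
        rw [v.map_mul, v.map_pow, hvβ]
      have hdeglt : f.natDegree < n := hdim ▸ hfdeg
      have hdist : ∀ i ∈ Finset.range (f.natDegree + 1), ∀ j ∈ Finset.range (f.natDegree + 1),
          i ≠ j → g i ≠ 0 → g j ≠ 0 → v (g i) ≠ v (g j) := by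
        intro i hi j hj hij hgi hgj heq
        have hci : f.coeff i ≠ 0 := fun h => hgi (by simp [hg, h])
        have hcj : f.coeff j ≠ 0 := fun h => hgj (by simp [hg, h])
        have hiltn : i < n := by have := Finset.mem_range.mp hi; omega
        have hjltn : j < n := by have := Finset.mem_range.mp hj; omega
        rw [hvg i hgi, hvg j hgj] at heq
        rcases hij.lt_or_gt with h | h
        · exact hminn (j - i) (by omega) (by omega) (aux_ratio_mem v hα0 hci hcj h heq)
        · exact hminn (i - j) (by omega) (by omega) (aux_ratio_mem v hα0 hcj hci h heq.symm)
      have hxne : ∑ i ∈ Finset.range (f.natDegree + 1), g i ≠ 0 := by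
        rw [← hsum]; exact hx0
      obtain ⟨i, hi, hgi, hvx⟩ := aux_dominant v hv _ g hdist hxne
      have hci : f.coeff i ≠ 0 := fun h => hgi (by simp [hg, h])
      have hiltn : i < n := by have := Finset.mem_range.mp hi; omega
      refine ⟨f.coeff i, i, hci, hiltn, ?_⟩
      rw [hsum, hvx, hvg i hgi]
    refine ⟨hvβ, hfinrank, ?_⟩
    show Module.finrank K (IntermediateField.adjoin K ({β} : Set Ω)) =
      Subgroup.relIndex (valueGroup v (algebraMap K Ω).fieldRange)
        (valueGroup v (IntermediateField.adjoin K ({β} : Set Ω)).toSubfield)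
    rw [hfinrank]
    set L := IntermediateField.adjoin K ({β} : Set Ω) with hL
    set H := valueGroup v (algebraMap K Ω).fieldRange with hH
    set G := valueGroup v L.toSubfield with hG
    set a : ℝˣ := Units.mk0 (v α) hvα.ne' with ha
    have haval : (a : ℝ) = v α := rfl
    have haG : a ∈ G := ⟨β, hβne, IntermediateField.mem_adjoin_simple_self K β, by
      rw [hvβ]; exact haval.symm⟩
    have hmemH : ∀ c : K, c ≠ 0 → ∀ r : ℝˣ, (r : ℝ) = v (algebraMap K Ω c) → r ∈ H := by
      intro c hc r hr
      exact ⟨algebraMap K Ω c, by simpa using (algebraMap K Ω).injective.ne hc,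
        RingHom.mem_fieldRange.mpr ⟨c, rfl⟩, hr.symm⟩
    have hker : (QuotientGroup.mk' H).ker = H := QuotientGroup.ker_mk' H
    have hrel : H.relIndex G = Nat.card (G.map (QuotientGroup.mk' H)) := by
      conv_lhs => rw [← hker]
      exact Subgroup.relIndex_ker G (QuotientGroup.mk' H)
    have hmap : G.map (QuotientGroup.mk' H) = Subgroup.zpowers ((QuotientGroup.mk' H) a) := by
      apply le_antisymm
      · rintro _ ⟨g, hgG, rfl⟩
        obtain ⟨x, hx0, hxL, hxv⟩ := hgG
        obtain ⟨c, i, hc0, hin, hval⟩ := key x hxL hx0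
        have hu : g * (a ^ i)⁻¹ ∈ H := by
          apply hmemH c hc0
          have h1 : ((g * (a ^ i)⁻¹ : ℝˣ) : ℝ) = (g : ℝ) * ((v α) ^ i)⁻¹ := by
            simp [Units.val_mul, Units.val_inv_eq_inv_val, Units.val_pow_eq_pow_val, haval]
          rw [h1, ← hxv, hval, mul_inv_cancel_right₀ (pow_ne_zero _ hvα.ne')]
        have hgdecomp : g = a ^ i * (g * (a ^ i)⁻¹) := by
          rw [mul_comm g ((a ^ i)⁻¹), mul_inv_cancel_left]
        rw [Subgroup.mem_zpowers_iff]
        refine ⟨(i : ℤ), ?_⟩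
        rw [zpow_natCast, ← map_pow]
        have h2 : (QuotientGroup.mk' H) (g * (a ^ i)⁻¹) = 1 := by
          rw [← MonoidHom.mem_ker, hker]; exact hu
        calc (QuotientGroup.mk' H) (a ^ i)
            = (QuotientGroup.mk' H) (a ^ i) * (QuotientGroup.mk' H) (g * (a ^ i)⁻¹) := by
              rw [h2]
              exact (mul_one ((QuotientGroup.mk' H) (a ^ i))).symm
          _ = (QuotientGroup.mk' H) (a ^ i * (g * (a ^ i)⁻¹)) := (map_mul _ _ _).symm
          _ = (QuotientGroup.mk' H) g := by rw [← hgdecomp]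
      · rw [Subgroup.zpowers_le]
        exact Subgroup.mem_map_of_mem _ haG
    rw [hrel, hmap, Nat.card_zpowers]
    symm
    rw [orderOf_eq_iff hn]
    constructor
    · rw [← map_pow]
      rw [← MonoidHom.mem_ker, hker]
      apply hmemH b hbne
      rw [Units.val_pow_eq_pow_val, haval, hb]
    · intro m' hm'lt hm'0 h1
      rw [← map_pow, ← MonoidHom.mem_ker, hker] at h1
      obtain ⟨x, hx0, hxF, hxv⟩ := h1
      obtain ⟨c, hc⟩ := RingHom.mem_fieldRange.mp hxF
      have hc0 : c ≠ 0 := by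
        rintro rfl
        rw [map_zero] at hc
        exact hx0 hc.symm
      refine hminn m' hm'0 hm'lt ⟨c, hc0, ?_⟩
      rw [hc, hxv, Units.val_pow_eq_pow_val, haval]

end PGR
end
end
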